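/- arXiv:1705.05786 — 7 statements merged into one kernel-verified Lean document; each statement's English description precedes it below -/
import Mathlib

section
/- Let w be an infinite LSP word over a finite alphabet A and let f be a bLSP morphism of A*. The following assertions are equivalent: (1) f(w) is not LSP; (2) there exist pairwise distinct letters a, b, c such that w is (a, b, c)-fragile and the longest common prefix of f(b) and f(c) is strictly longer than the longest common prefix of f(a) and f(b); (3) there exist pairwise distinct letters a, b, c such that w is (a, b, c)-fragile and f is LSP (a, b, c)-breaking. -/
/-- `u` is a prefix of the infinite word `w`. -/
def PrefI {A : Type*} (u : List A) (w : ℕ → A) : Prop :=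
  ∀ i (h : i < u.length), u[i] = w i

/-- `u` is a factor of the infinite word `w`. -/
def FactorI {A : Type*} (w : ℕ → A) (u : List A) : Prop :=
  ∃ k, ∀ i (h : i < u.length), u[i] = w (k + i)

/-- The infinite word `w` is LSP: every left special factor of `w` is a prefix of `w`. -/
def LSPInf {A : Type*} (w : ℕ → A) : Prop :=
  ∀ (u : List A) (a b : A), a ≠ b → FactorI w (a :: u) → FactorI w (b :: u) → PrefI u w

/-- `f` is a bLSP morphism (given by its action on letters). -/
def IsBLSP {A : Type*} (f : A → List A) : Prop :=
  ∃ α, f α = [α] ∧ ∀ β, β ≠ α → ∃ γ, f β = f γ ++ [β]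

/-- `v` is the image of the infinite word `w` under the non-erasing morphism `f`,
i.e. every finite concatenation `f (w 0) ++ ⋯ ++ f (w (n-1))` is a prefix of `v`. -/
def IsImage {A B : Type*} (f : A → List B) (w : ℕ → A) (v : ℕ → B) : Prop :=
  ∀ n, PrefI (((List.range n).map w).flatMap f) v

/-- `u` is an `(a, b, c, β, γ)`-fragility of `w`: `ua` is a prefix of `w` while
`βub` and `γuc` are factors of `w`. -/
def FragilityAt {A : Type*} (w : ℕ → A) (u : List A) (a b c β γ : A) : Prop :=
  PrefI (u ++ [a]) w ∧ FactorI w (β :: (u ++ [b])) ∧ FactorI w (γ :: (u ++ [c]))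

/-- `w` is `(a, b, c)`-fragile. -/
def Fragile {A : Type*} (w : ℕ → A) (a b c : A) : Prop :=
  ∃ β γ, β ≠ γ ∧ ∃ u, FragilityAt w u a b c β γ

/-- `f` is LSP `(a, b, c)`-breaking: the image of every `(a, b, c)`-fragile
infinite LSP word under `f` is not LSP. -/
def Breaking {A : Type*} (f : A → List A) (a b c : A) : Prop :=
  ∀ w : ℕ → A, LSPInf w → Fragile w a b c → ∀ v, IsImage f w v → ¬ LSPInf v

/-- The longest common prefix of two words. -/
def lcp {A : Type*} [DecidableEq A] : List A → List A → List A
  | [], _ => []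
  | _ :: _, [] => []
  | a :: u, b :: v => if a = b then a :: lcp u v else []

section LCP
variable {A : Type*} [DecidableEq A]

theorem lcp_prefix_left : ∀ (u v : List A), lcp u v <+: u
  | [], _ => by simp [lcp]
  | _ :: _, [] => by simp [lcp]
  | a :: u, b :: v => by
    by_cases h : a = b
    · simp only [lcp, h, if_pos rfl]
      exact List.cons_prefix_cons.mpr ⟨rfl, lcp_prefix_left u v⟩
    · simp [lcp, h]

theorem lcp_prefix_right : ∀ (u v : List A), lcp u v <+: v
  | [], _ => by simp [lcp]
  | _ :: _, [] => by simp [lcp]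
  | a :: u, b :: v => by
    by_cases h : a = b
    · subst h
      simp only [lcp, if_pos rfl]
      exact List.cons_prefix_cons.mpr ⟨rfl, lcp_prefix_right u v⟩
    · simp [lcp, h]

theorem lcp_ne : ∀ (u v : List A) (h1 : (lcp u v).length < u.length)
    (h2 : (lcp u v).length < v.length),
    u[(lcp u v).length] ≠ v[(lcp u v).length]
  | [], _ => by simp
  | _ :: _, [] => by simp
  | a :: u, b :: v => by
    by_cases h : a = b
    · intro h1 h2
      simp only [lcp, h, if_pos rfl] at h1 h2 ⊢
      simpa using lcp_ne u v (by simpa using h1) (by simpa using h2)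
    · intro h1 h2
      simpa [lcp, h] using h

theorem le_lcp : ∀ (u v : List A) (n : ℕ), n ≤ u.length → n ≤ v.length →
    (∀ i (h1 : i < u.length) (h2 : i < v.length), i < n → u[i] = v[i]) →
    n ≤ (lcp u v).length
  | [], _, n => by simp +contextual
  | _ :: _, [], n => by simp +contextual
  | a :: u, b :: v, n => by
    intro h1 h2 hag
    match n with
    | 0 => exact Nat.zero_le _
    | n + 1 =>
      have hab : a = b := hag 0 (by simp) (by simp) (by omega)
      subst hab
      have hstep : lcp (a::u) (a::v) = a :: lcp u v := by simp [lcp]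
      rw [hstep, List.length_cons]
      have := le_lcp u v n (by simpa using h1) (by simpa using h2)
        (fun i hi1 hi2 hin => by
          exact hag (i+1) (by simpa using hi1) (by simpa using hi2) (by omega))
      omega

end LCP

section BLSP
variable {A : Type*} [DecidableEq A] {f : A → List A} {α : A}
  (hα : f α = [α]) (hch : ∀ β, β ≠ α → ∃ γ, f β = f γ ++ [β])

include hα hch

theorem f_ne_nil : ∀ β, f β ≠ [] := by
  intro β
  by_cases h : β = α
  · subst h; simp [hα]
  · obtain ⟨γ, hγ⟩ := hch β h
    simp [hγ]

theorem f_last : ∀ β, (f β).getLast? = some β := by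
  intro β
  by_cases h : β = α
  · subst h; simp [hα]
  · obtain ⟨γ, hγ⟩ := hch β h
    simp [hγ]

theorem f_inj : ∀ β γ, f β = f γ → β = γ := by
  intro β γ h
  have h1 := f_last hα hch β
  rw [h, f_last hα hch γ] at h1
  exact (Option.some_inj.mp h1).symm

theorem f_take : ∀ n β, (f β).length ≤ n → ∀ t (ht : t < (f β).length),
    (f β).take (t + 1) = f ((f β)[t]) := by
  intro n
  induction n with
  | zero => intro β hβ; have := f_ne_nil hα hch β; simp at hβ; simp [hβ] at this
  | succ n ih =>
    intro β hβ t ht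
    by_cases h : β = α
    · subst h
      have ht' : t = 0 := by rw [hα] at ht; simpa using ht
      subst ht'
      have e : (f β)[0] = β := by
        have := List.getElem_of_eq hα (show (0:ℕ) < (f β).length from ht)
        simpa using this
      rw [e, hα]; simp
    · obtain ⟨γ, hγ⟩ := hch β h
      have htl : t < (f γ ++ [β]).length := by rw [← hγ]; exact ht
      have hg : (f β)[t] = (f γ ++ [β])[t] := List.getElem_of_eq hγ ht
      rcases Nat.lt_or_ge t (f γ).length with h1 | h1
      · have hg2 : (f γ ++ [β])[t] = (f γ)[t] := List.getElem_append_left h1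
        conv_lhs => rw [hγ]
        rw [List.take_append_of_le_length (by omega), hg, hg2]
        have hlen : (f γ).length ≤ n := by
          rw [hγ] at hβ; simp at hβ; omega
        exact ih γ hlen t h1
      · have ht2 : t = (f γ).length := by
          rw [hγ] at ht; simp at ht; omega
        subst ht2
        have hg2 : (f γ ++ [β])[(f γ).length] = β := by
          rw [List.getElem_append_right (le_refl _)]; simp
        conv_lhs => rw [hγ]
        rw [hg, hg2, ← hγ]
        have : (f β).length = (f γ).length + 1 := by rw [hγ]; simp
        rw [← this, List.take_length]


theorem f_head : ∀ β (h : 0 < (f β).length), (f β)[0] = α := by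
  intro β h
  set e := (f β)[0] with he
  have h1 : f e = (f β).take 1 := (f_take hα hch (f β).length β le_rfl 0 h).symm
  have hlen : (f e).length = 1 := by rw [h1, List.length_take]; omega
  obtain ⟨x, hx⟩ := List.length_eq_one_iff.mp hlen
  have hxe : x = e := by
    have := f_last hα hch e
    rw [hx] at this
    simpa using this
  subst hxe
  by_contra hne
  obtain ⟨γ, hγ⟩ := hch e hne
  rw [hγ] at hx
  have hlen2 := congrArg List.length hx
  have hγpos : 0 < (f γ).length := List.length_pos_iff.mpr (f_ne_nil hα hch γ)
  simp only [List.length_append, List.length_cons, List.length_nil] at hlen2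
  omega

theorem f_notalpha : ∀ β t (ht : t < (f β).length), 0 < t → (f β)[t] ≠ α := by
  intro β t ht htpos hc
  have h1 : f ((f β)[t]) = (f β).take (t+1) := (f_take hα hch (f β).length β le_rfl t ht).symm
  rw [hc, hα] at h1
  have : (1:ℕ) = t + 1 := by
    have := congrArg List.length h1
    simpa [Nat.min_eq_left (by omega : t + 1 ≤ (f β).length)] using this
  omega

theorem f_last_getElem : ∀ β (h : (f β).length - 1 < (f β).length), (f β)[(f β).length - 1] = β := by
  intro β h
  have h0 := f_last hα hch β
  have h1 : (f β).getLast (f_ne_nil hα hch β) = β := by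
    have := List.getLast?_eq_getLast (f_ne_nil hα hch β)
    rw [this] at h0
    simpa using h0
  rw [← List.getLast_eq_getElem (f_ne_nil hα hch β)]
  exact h1

end BLSP

section INFRA
variable {A : Type*} [DecidableEq A]

/-- Length of the image of the first `n` letters. -/
def Sf (f : A → List A) (w : ℕ → A) (n : ℕ) : ℕ :=
  (((List.range n).map w).flatMap f).length

theorem Sf_zero (f : A → List A) (w : ℕ → A) : Sf f w 0 = 0 := by simp [Sf]

theorem Sf_succ (f : A → List A) (w : ℕ → A) (n : ℕ) :
    Sf f w (n + 1) = Sf f w n + (f (w n)).length := by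
  simp [Sf, List.range_succ]

variable {f : A → List A} {α : A}
  (hα : f α = [α]) (hch : ∀ β, β ≠ α → ∃ γ, f β = f γ ++ [β])
  {w : ℕ → A} {v : ℕ → A} (him : IsImage f w v)

include hα hch

theorem Sf_lt_succ (n : ℕ) : Sf f w n < Sf f w (n + 1) := by
  rw [Sf_succ]
  have := f_ne_nil hα hch (w n)
  have : 0 < (f (w n)).length := List.length_pos_iff.mpr this
  omega

theorem Sf_strictMono : StrictMono (Sf f w) :=
  strictMono_nat_of_lt_succ (Sf_lt_succ hα hch)

theorem le_Sf (n : ℕ) : n ≤ Sf f w n := by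
  induction n with
  | zero => simp [Sf_zero]
  | succ n ih => have := Sf_lt_succ (w := w) hα hch n; omega

theorem exists_block : ∀ i : ℕ, ∃ n t, i = Sf f w n + t ∧ t < (f (w n)).length := by
  intro i
  induction i with
  | zero =>
    refine ⟨0, 0, by simp [Sf_zero], ?_⟩
    exact List.length_pos_iff.mpr (f_ne_nil hα hch (w 0))
  | succ i ih =>
    obtain ⟨n, t, hi, ht⟩ := ih
    rcases Nat.lt_or_ge (t + 1) (f (w n)).length with h | h
    · exact ⟨n, t + 1, by omega, h⟩
    · refine ⟨n + 1, 0, ?_, List.length_pos_iff.mpr (f_ne_nil hα hch (w (n+1)))⟩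
      rw [Sf_succ]
      omega

include him

theorem v_block : ∀ n t (ht : t < (f (w n)).length), v (Sf f w n + t) = (f (w n))[t] := by
  intro n t ht
  have hp := him (n + 1)
  have hlen : Sf f w n + t < (((List.range (n+1)).map w).flatMap f).length := by
    have : (((List.range (n+1)).map w).flatMap f).length = Sf f w (n+1) := rfl
    rw [this, Sf_succ]; omega
  have h1 := hp (Sf f w n + t) hlen
  rw [← h1]
  have hsplit : ((List.range (n+1)).map w).flatMap f
      = ((List.range n).map w).flatMap f ++ f (w n) := by
    simp [List.range_succ]
  rw [List.getElem_of_eq hsplit hlen]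
  rw [List.getElem_append_right
    (show (((List.range n).map w).flatMap f).length ≤ Sf f w n + t from Nat.le_add_right _ _)]
  have hidx : Sf f w n + t - (((List.range n).map w).flatMap f).length = t := by
    simp [Sf]
  simp only [hidx]

theorem v_start (n : ℕ) : v (Sf f w n) = α := by
  have h0 : 0 < (f (w n)).length := List.length_pos_iff.mpr (f_ne_nil hα hch (w n))
  have := v_block hα hch him n 0 h0
  simpa using this.trans (f_head hα hch (w n) h0)

theorem alpha_start : ∀ i, v i = α → ∃ n, i = Sf f w n := by
  intro i hi
  obtain ⟨n, t, rfl, ht⟩ := exists_block (w := w) hα hch i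
  rcases Nat.eq_zero_or_pos t with h | h
  · exact ⟨n, by omega⟩
  · exfalso
    have := v_block hα hch him n t ht
    rw [hi] at this
    exact f_notalpha hα hch (w n) t ht h this.symm

theorem pred_letter (n : ℕ) : v (Sf f w (n + 1) - 1) = w n := by
  have h0 : 0 < (f (w n)).length := List.length_pos_iff.mpr (f_ne_nil hα hch (w n))
  have h1 : Sf f w (n+1) - 1 = Sf f w n + ((f (w n)).length - 1) := by
    rw [Sf_succ]; omega
  rw [h1, v_block hα hch him n _ (by omega)]
  exact f_last_getElem hα hch (w n) (by omega)

theorem v_flat : ∀ (y : List A) (k : ℕ), (∀ i (h : i < y.length), y[i] = w (k + i)) →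
    ∀ t (ht : t < (y.flatMap f).length), v (Sf f w k + t) = (y.flatMap f)[t] := by
  intro y
  induction y with
  | nil => intro k _ t ht; simp at ht
  | cons y0 y ih =>
    intro k hy t ht
    have hy0 : y0 = w k := by exact hy 0 (by simp)
    have hflat : (y0 :: y).flatMap f = f (w k) ++ y.flatMap f := by
      simp [hy0]
    rw [List.getElem_of_eq hflat ht]
    rcases Nat.lt_or_ge t (f (w k)).length with h | h
    · rw [List.getElem_append_left h]
      exact v_block hα hch him k t h
    · rw [List.getElem_append_right h]
      have h2 : Sf f w k + t = Sf f w (k+1) + (t - (f (w k)).length) := by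
        rw [Sf_succ]; omega
      rw [h2]
      have ht2 : t - (f (w k)).length < (y.flatMap f).length := by
        rw [hflat] at ht
        simp only [List.length_append] at ht
        omega
      exact ih (k+1) (fun i hi => by have hh := hy (i+1) (by simpa using hi); rw [List.getElem_cons_succ] at hh; rw [hh]; congr 1; omega) _ ht2

omit hα hch him in
theorem Sf_shift : ∀ (y : List A) (k : ℕ), (∀ i (h : i < y.length), y[i] = w (k + i)) →
    Sf f w (k + y.length) = Sf f w k + (y.flatMap f).length := by
  intro y
  induction y with
  | nil => intro k _; simp
  | cons y0 y ih =>
    intro k hy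
    have hy0 : y0 = w k := by exact hy 0 (by simp)
    have := ih (k+1) (fun i hi => by have hh := hy (i+1) (by simpa using hi); rw [List.getElem_cons_succ] at hh; rw [hh]; congr 1; omega)
    have hl : k + (y0 :: y).length = (k + 1) + y.length := by simp; omega
    rw [hl, this, Sf_succ]
    simp [hy0]
    omega

end INFRA

section FORWARD
variable {A : Type*} [DecidableEq A] {f : A → List A} {α : A}
  (hα : f α = [α]) (hch : ∀ β, β ≠ α → ∃ γ, f β = f γ ++ [β])
  {w : ℕ → A} {v : ℕ → A} (him : IsImage f w v)

include hα hch him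

theorem forward_lemma {a b c : A} (hfr : Fragile w a b c)
    (hlcp : (lcp (f a) (f b)).length < (lcp (f b) (f c)).length) :
    ¬ LSPInf v := by
  obtain ⟨β, γ, hβγ, u, hpre, hfb, hfc⟩ := hfr
  set p := lcp (f b) (f c) with hp
  set Fu := u.flatMap f with hFu
  -- basic facts from the fragility
  have hupre : ∀ i (h : i < u.length), u[i] = w i := by
    intro i h
    have := hpre i (by simp; omega)
    rwa [List.getElem_append_left h] at this
  have hwa : w u.length = a := by
    have := hpre u.length (by simp)
    simp only [List.getElem_concat_length] at this
    exact this.symm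
  have hpb : p <+: f b := lcp_prefix_left _ _
  have hpc : p <+: f c := lcp_prefix_right _ _
  have hplb : p.length ≤ (f b).length := hpb.length_le
  have hplc : p.length ≤ (f c).length := hpc.length_le
  have hqa : (lcp (f a) (f b)).length ≤ (f a).length := (lcp_prefix_left _ _).length_le
  -- Sf f w u.length = Fu.length
  have hSfu : Sf f w u.length = Fu.length := by
    have h0 := Sf_shift (f := f) (w := w) u 0 (fun i h => by simpa using hupre i h)
    rw [Nat.zero_add, Sf_zero] at h0
    rw [hFu]
    omega
  -- the occurrence construction, for each of the two factors
  have occ : ∀ (δ e : A), FactorI w (δ :: (u ++ [e])) → p.length ≤ (f e).length →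
      (∀ s (hs : s < p.length) (hs2 : s < (f e).length), p[s] = (f e)[s]) →
      FactorI v (δ :: (Fu ++ p)) := by
    intro δ e hfac hple hpe
    obtain ⟨k, hk⟩ := hfac
    have hδ : δ = w k := by simpa using hk 0 (by simp)
    have hu' : ∀ i (h : i < u.length), u[i] = w (k + 1 + i) := by
      intro i h
      have := hk (i + 1) (by simp; omega)
      rw [List.getElem_cons_succ] at this
      rw [List.getElem_append_left h] at this
      rw [this]; ring_nf
    have hwe : w (k + 1 + u.length) = e := by
      have := hk (u.length + 1) (by simp)
      rw [List.getElem_cons_succ] at this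
      simp only [List.getElem_concat_length] at this
      rw [this]; congr 1; omega
    have hS1 : 1 ≤ Sf f w (k + 1) := le_trans (by omega) (le_Sf hα hch (k+1))
    refine ⟨Sf f w (k + 1) - 1, ?_⟩
    intro i hi
    match i with
    | 0 =>
      simp only [List.getElem_cons_zero, Nat.add_zero]
      rw [hδ]
      exact (pred_letter hα hch him k).symm
    | i + 1 =>
      rw [List.getElem_cons_succ]
      have hpos : Sf f w (k+1) - 1 + (i+1) = Sf f w (k+1) + i := by omega
      rw [hpos]
      simp only [List.length_cons, List.length_append] at hi
      have hix : i < Fu.length + p.length := by omega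
      rcases Nat.lt_or_ge i Fu.length with h1 | h1
      · rw [List.getElem_append_left h1]
        exact (v_flat hα hch him u (k+1) hu' i h1).symm
      · rw [List.getElem_append_right h1]
        have hsp : i - Fu.length < p.length := by omega
        have hshift : Sf f w (k + 1 + u.length) = Sf f w (k+1) + Fu.length :=
          Sf_shift (f := f) (w := w) u (k+1) hu'
        have hse : i - Fu.length < (f e).length := by omega
        rw [hpe (i - Fu.length) hsp hse]
        have hidx : Sf f w (k+1) + i = Sf f w (k + 1 + u.length) + (i - Fu.length) := by omega
        rw [hidx]
        have := v_block hα hch him (k + 1 + u.length) (i - Fu.length) (by rw [hwe]; omega)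
        rw [this]
        congr 1
        rw [hwe]
  have hoccb : FactorI v (β :: (Fu ++ p)) :=
    occ β b hfb hplb (fun s hs hs2 => hpb.getElem hs)
  have hoccc : FactorI v (γ :: (Fu ++ p)) :=
    occ γ c hfc hplc (fun s hs hs2 => hpc.getElem hs)
  -- (Fu ++ p) is not a prefix of v
  intro hL
  have hxpre : PrefI (Fu ++ p) v := hL (Fu ++ p) β γ hβγ hoccb hoccc
  set q' := (lcp (f a) (f b)).length with hq'
  have hi : Fu.length + q' < (Fu ++ p).length := by simp; omega
  have hxi := hxpre (Fu.length + q') hi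
  rw [List.getElem_append_right (Nat.le_add_right _ _)] at hxi
  have hidx2 : Fu.length + q' - Fu.length = q' := by omega
  simp only [hidx2] at hxi
  rcases Nat.lt_or_ge q' (f a).length with hcase | hcase
  · -- q' < |f a| : mismatch letters
    have hne : (f a)[q']'hcase ≠ (f b)[q']'(by omega) := lcp_ne (f a) (f b) hcase (by omega)
    have hv : v (Fu.length + q') = (f a)[q']'hcase := by
      have h2 := v_block hα hch him u.length q' (by rw [hwa]; exact hcase)
      rw [hSfu] at h2
      rw [h2]
      congr 1
      rw [hwa]
    rw [hv] at hxi
    have hpb' : p[q']'(by omega) = (f b)[q']'(by omega) := hpb.getElem (by omega)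
    rw [hpb'] at hxi
    exact hne hxi.symm
  · -- q' = |f a| : f a is a prefix of f b; next letter of v is α but p continues non-α
    have hqe : q' = (f a).length := le_antisymm hqa hcase
    have hfapos : 0 < (f a).length := List.length_pos_iff.mpr (f_ne_nil hα hch a)
    have hαv : v (Fu.length + q') = α := by
      have h3 : Fu.length + q' = Sf f w (u.length + 1) := by
        rw [Sf_succ, hSfu, hwa, hqe]
      rw [h3]
      exact v_start hα hch him (u.length + 1)
    have hnα : p[q']'(by omega) ≠ α := by
      have hpb' : p[q']'(by omega) = (f b)[q']'(by omega) := hpb.getElem (by omega)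
      rw [hpb']
      exact f_notalpha hα hch b q' (by omega) (by omega)
    rw [hαv] at hxi
    exact hnα hxi

end FORWARD

section HELPERS
variable {A : Type*} [DecidableEq A]

theorem factorI_of_prefix {w : ℕ → A} {x y : List A} (h : FactorI w y) (hp : x <+: y) :
    FactorI w x := by
  obtain ⟨k, hk⟩ := h
  exact ⟨k, fun i hi => by rw [hp.getElem hi]; exact hk i (lt_of_lt_of_le hi hp.length_le)⟩

theorem lcp_length_le_of_ne {u v : List A} {i : ℕ} (hiu : i < u.length) (hiv : i < v.length)
    (hne : u[i] ≠ v[i]) : (lcp u v).length ≤ i := by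
  by_contra hcon
  push_neg at hcon
  have h1 := (lcp_prefix_left u v).getElem (show i < (lcp u v).length from hcon)
  have h2 := (lcp_prefix_right u v).getElem (show i < (lcp u v).length from hcon)
  exact hne (h1.symm.trans h2)

theorem lcp_length_le_left (u v : List A) : (lcp u v).length ≤ u.length :=
  (lcp_prefix_left u v).length_le

end HELPERS

section CONVERSE
variable {A : Type*} [DecidableEq A] {f : A → List A} {α : A}
  (hα : f α = [α]) (hch : ∀ β, β ≠ α → ∃ γ, f β = f γ ++ [β])
  {w : ℕ → A} {v : ℕ → A} (him : IsImage f w v)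

include hα hch him

theorem converse_lemma (hw : LSPInf w)
    (H : ∀ a b c : A, a ≠ b → b ≠ c → a ≠ c → Fragile w a b c →
      ¬ ((lcp (f a) (f b)).length < (lcp (f b) (f c)).length)) :
    LSPInf v := by
  have h0α : v 0 = α := by
    have := v_start hα hch him 0
    rwa [Sf_zero] at this
  suffices key : ∀ N (u : List A), u.length ≤ N → ∀ d d', d ≠ d' →
      FactorI v (d :: u) → FactorI v (d' :: u) → PrefI u v by
    intro u d d' hdd' h1 h2
    exact key u.length u le_rfl d d' hdd' h1 h2
  intro N
  induction N with
  | zero =>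
    intro u hu d d' _ _ _ i hi
    omega
  | succ N ih =>
    intro u hu d d' hdd' hfac1 hfac2
    rcases Nat.lt_or_ge u.length (N + 1) with hlt | hge
    · exact ih u (by omega) d d' hdd' hfac1 hfac2
    have hlen : u.length = N + 1 := by omega
    have hune : u ≠ [] := by intro h; rw [h] at hlen; simp at hlen
    have hsplit : u.dropLast ++ [u.getLast hune] = u := List.dropLast_append_getLast hune
    set u' := u.dropLast with hu'def
    set e := u.getLast hune with hedef
    have hlen' : u'.length = N := by
      rw [hu'def, List.length_dropLast]
      omega
    have hupre : u' <+: u := ⟨[e], hsplit⟩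
    have hfac1' : FactorI v (d :: u') :=
      factorI_of_prefix hfac1 (List.cons_prefix_cons.mpr ⟨rfl, hupre⟩)
    have hfac2' : FactorI v (d' :: u') :=
      factorI_of_prefix hfac2 (List.cons_prefix_cons.mpr ⟨rfl, hupre⟩)
    have hpu' : PrefI u' v := ih u' (by omega) d d' hdd' hfac1' hfac2'
    suffices hev : e = v u'.length by
      intro i hi
      have hiu : i < (u' ++ [e]).length := by simp; omega
      have hgl : u[i] = (u' ++ [e])[i] := List.getElem_of_eq hsplit.symm hi
      rw [hgl]
      rcases Nat.lt_or_ge i u'.length with h | h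
      · rw [List.getElem_append_left h]
        exact hpu' i h
      · have hieq : i = u'.length := by simp at hiu; omega
        subst hieq
        simp only [List.getElem_concat_length]
        exact hev
    by_contra hne
    -- unpack both occurrences
    have unpack : ∀ (g : A) (k : ℕ), (∀ i (h : i < (g :: u).length), (g :: u)[i] = v (k + i)) →
        v k = g ∧ (∀ i, i < u'.length → v (k + 1 + i) = v i) ∧ v (k + 1 + u'.length) = e := by
      intro g k hk
      refine ⟨by exact (hk 0 (by simp)).symm, ?_, ?_⟩
      · intro i hi
        have h1 := hk (i + 1) (by simp; omega)
        rw [List.getElem_cons_succ] at h1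
        have h2 : u[i]'(by omega) = (u' ++ [e])[i]'(by simp; omega) :=
          List.getElem_of_eq hsplit.symm _
        rw [h2, List.getElem_append_left hi] at h1
        rw [show k + 1 + i = k + (i + 1) by omega, ← h1]
        exact hpu' i hi
      · have h1 := hk (u'.length + 1) (by simp; omega)
        rw [List.getElem_cons_succ] at h1
        have h2 : u[u'.length]'(by omega) = (u' ++ [e])[u'.length]'(by simp) :=
          List.getElem_of_eq hsplit.symm _
        rw [h2] at h1
        simp only [List.getElem_concat_length] at h1
        rw [show k + 1 + u'.length = k + (u'.length + 1) by omega]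
        exact h1.symm
    obtain ⟨k₁, hk₁⟩ := hfac1
    obtain ⟨k₂, hk₂⟩ := hfac2
    obtain ⟨hd₁, hocc₁, hE₁⟩ := unpack d k₁ hk₁
    obtain ⟨hd₂, hocc₂, hE₂⟩ := unpack d' k₂ hk₂
    rcases Nat.eq_zero_or_pos u'.length with hn0 | hn1
    · -- u' is empty : e is a left special letter, must be α = v 0
      rw [hn0] at hE₁ hE₂ hne
      simp only [Nat.add_zero] at hE₁ hE₂
      have heα : e ≠ α := by rw [h0α] at hne; exact hne
      have decode : ∀ (g : A) (k : ℕ), v k = g → v (k + 1) = e → f e = f g ++ [e] := by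
        intro g k hvk hvke
        obtain ⟨m, t, hkt, ht⟩ := exists_block (w := w) hα hch (k + 1)
        have htpos : 0 < t := by
          rcases Nat.eq_zero_or_pos t with h | h
          · exfalso
            apply heα
            rw [← hvke, hkt, h, Nat.add_zero]
            exact v_start hα hch him m
          · exact h
        have hve : (f (w m))[t] = e := by
          rw [← hvke, hkt]
          exact (v_block hα hch him m t ht).symm
        have hvg : (f (w m))[t - 1]'(by omega) = g := by
          rw [← hvk]
          have : k = Sf f w m + (t - 1) := by omega
          rw [this]
          exact (v_block hα hch him m (t - 1) (by omega)).symm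
        have htake1 : (f (w m)).take (t + 1) = f e := by
          rw [← hve]; exact f_take hα hch (f (w m)).length (w m) le_rfl t ht
        have htake2 : (f (w m)).take t = f g := by
          rw [← hvg]
          have := f_take hα hch (f (w m)).length (w m) le_rfl (t - 1) (by omega)
          rw [show t - 1 + 1 = t by omega] at this
          exact this
        rw [← htake1, ← htake2, List.take_succ]
        congr 1
        rw [List.getElem?_eq_getElem ht, hve]
        rfl
      have he1 : f e = f d ++ [e] := decode d k₁ hd₁ hE₁
      have he2 : f e = f d' ++ [e] := decode d' k₂ hd₂ hE₂
      have : f d = f d' := by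
        have h3 : f d ++ [e] = f d' ++ [e] := by rw [← he1, ← he2]
        have h4 := congrArg List.dropLast h3
        rwa [List.dropLast_concat, List.dropLast_concat] at h4
      exact hdd' (f_inj hα hch d d' this)
    · -- u' nonempty
      obtain ⟨K, R, hKR, hR⟩ := exists_block (w := w) hα hch (u'.length - 1)
      have hn'KR : u'.length = Sf f w K + R + 1 := by omega
      -- per-occurrence decoded data
      have occdata : ∀ (g : A) (k : ℕ), v k = g →
          (∀ i, i < u'.length → v (k + 1 + i) = v i) → v (k + 1 + u'.length) = e →
          ∃ m, 1 ≤ m ∧ g = w (m - 1) ∧ (∀ k', k' < K → w (m + k') = w k') ∧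
            ∃ (_ : R + 1 ≤ (f (w (m + K))).length),
              (∀ t (h : t ≤ R), (f (w (m + K)))[t]'(by omega) = (f (w K))[t]'(by omega)) ∧
              (((f (w (m + K))).length = R + 1 ∧ e = α) ∨
                ∃ (hL2 : R + 1 < (f (w (m + K))).length), (f (w (m + K)))[R + 1]'hL2 = e) := by
        intro g k hvk hocc hE
        have hvα : v (k + 1) = α := by
          have h1 := hocc 0 hn1
          rw [Nat.add_zero] at h1
          rw [h1, h0α]
        obtain ⟨m, hm⟩ := alpha_start hα hch him (k + 1) hvα
        have hm1 : 1 ≤ m := by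
          by_contra h
          have hm0 : m = 0 := by omega
          rw [hm0, Sf_zero] at hm
          omega
        have hg : g = w (m - 1) := by
          rw [← hvk]
          have h1 : k = Sf f w ((m - 1) + 1) - 1 := by
            rw [show m - 1 + 1 = m from by omega, ← hm]
            omega
          rw [h1, pred_letter hα hch him]
        have align : ∀ kk, Sf f w kk < u'.length →
            Sf f w (m + kk) = Sf f w m + Sf f w kk ∧ ∀ k', k' < kk → w (m + k') = w k' := by
          intro kk
          induction kk with
          | zero =>
            intro _
            exact ⟨by simp [Sf_zero], fun k' h => absurd h (Nat.not_lt_zero k')⟩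
          | succ kk ihk =>
            intro hkk1
            have hstep := Sf_lt_succ (w := w) hα hch kk
            have hkk : Sf f w kk < u'.length := by omega
            obtain ⟨ha, hw'⟩ := ihk hkk
            have hSkk := Sf_succ f w kk
            have hposk : 0 < (f (w kk)).length := List.length_pos_iff.mpr (f_ne_nil hα hch _)
            have hposmk : 0 < (f (w (m + kk))).length := List.length_pos_iff.mpr (f_ne_nil hα hch _)
            have hAg : ∀ t (h : t < (f (w kk)).length), v (Sf f w (m + kk) + t) = (f (w kk))[t] := by
              intro t ht
              have h1 : Sf f w kk + t < u'.length := by omega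
              have h2 : v (k + 1 + (Sf f w kk + t)) = v (Sf f w kk + t) := hocc _ h1
              have h3 : k + 1 + (Sf f w kk + t) = Sf f w (m + kk) + t := by
                rw [ha, ← hm]; omega
              rw [← h3, h2]
              exact v_block hα hch him kk t ht
            have hge : (f (w kk)).length ≤ (f (w (m + kk))).length := by
              by_contra hcon
              push_neg at hcon
              have h1 : v (Sf f w (m + kk) + (f (w (m + kk))).length) = α := by
                rw [← Sf_succ]
                exact v_start hα hch him (m + kk + 1)
              have h2 := hAg (f (w (m + kk))).length hcon
              rw [h1] at h2
              exact f_notalpha hα hch (w kk) _ hcon (by omega) h2.symm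
            have hle : (f (w (m + kk))).length ≤ (f (w kk)).length := by
              by_contra hcon
              push_neg at hcon
              have h1 : v (Sf f w m + Sf f w (kk + 1)) = α := by
                have h2 : v (k + 1 + Sf f w (kk + 1)) = v (Sf f w (kk + 1)) := hocc _ hkk1
                rw [show Sf f w m + Sf f w (kk + 1) = k + 1 + Sf f w (kk + 1) from by omega, h2]
                exact v_start hα hch him (kk + 1)
              obtain ⟨m'', hm''⟩ := alpha_start hα hch him _ h1
              have hSmk1 := Sf_succ f w (m + kk)
              have hlt1 : Sf f w (m + kk) < Sf f w m'' := by omega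
              have hlt2 : Sf f w m'' < Sf f w (m + kk + 1) := by omega
              have hmono := Sf_strictMono (w := w) hα hch
              have hi1 : m + kk < m'' := hmono.lt_iff_lt.mp hlt1
              have hi2 : m'' < m + kk + 1 := hmono.lt_iff_lt.mp hlt2
              omega
            have hleneq : (f (w (m + kk))).length = (f (w kk)).length := le_antisymm hle hge
            have hfeq : f (w (m + kk)) = f (w kk) := by
              apply List.ext_getElem hleneq
              intro t h1 h2
              rw [← hAg t h2]
              exact (v_block hα hch him (m + kk) t h1).symm
            have hwkk : w (m + kk) = w kk := f_inj hα hch _ _ hfeq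
            refine ⟨?_, ?_⟩
            · rw [show m + (kk + 1) = (m + kk) + 1 from by omega, Sf_succ, Sf_succ, ha, hwkk]
              omega
            · intro k' h
              rcases Nat.lt_or_ge k' kk with h' | h'
              · exact hw' k' h'
              · have hk'e : k' = kk := by omega
                rw [hk'e]
                exact hwkk
        have hSfK : Sf f w K < u'.length := by omega
        obtain ⟨haK, hwK⟩ := align K hSfK
        have htail : ∀ t (h : t ≤ R), v (Sf f w (m + K) + t) = (f (w K))[t]'(by omega) := by
          intro t ht
          have h1 : Sf f w K + t < u'.length := by omega
          have h2 : k + 1 + (Sf f w K + t) = Sf f w (m + K) + t := by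
            rw [haK, ← hm]; omega
          rw [← h2, hocc _ h1]
          exact v_block hα hch him K t (by omega)
        have htailE : v (Sf f w (m + K) + (R + 1)) = e := by
          have h2 : k + 1 + u'.length = Sf f w (m + K) + (R + 1) := by
            rw [haK, ← hm]; omega
          rw [← h2]
          exact hE
        have hL1 : R + 1 ≤ (f (w (m + K))).length := by
          by_contra hcon
          push_neg at hcon
          have hpos : 0 < (f (w (m + K))).length := List.length_pos_iff.mpr (f_ne_nil hα hch _)
          have h1 : v (Sf f w (m + K) + (f (w (m + K))).length) = α := by
            rw [← Sf_succ]
            exact v_start hα hch him (m + K + 1)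
          have h2 := htail (f (w (m + K))).length (by omega)
          rw [h1] at h2
          exact f_notalpha hα hch (w K) _ (by omega) (by omega) h2.symm
        refine ⟨m, hm1, hg, hwK, hL1, ?_, ?_⟩
        · intro t ht
          rw [← htail t ht]
          exact (v_block hα hch him (m + K) t (by omega)).symm
        · rcases Nat.lt_or_ge (R + 1) (f (w (m + K))).length with h | h
          · refine Or.inr ⟨h, ?_⟩
            rw [← htailE]
            exact (v_block hα hch him (m + K) (R + 1) h).symm
          · refine Or.inl ⟨by omega, ?_⟩
            rw [← htailE, show Sf f w (m + K) + (R + 1) = Sf f w (m + K + 1) from by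
              rw [Sf_succ]; omega]
            exact v_start hα hch him _
      obtain ⟨m₁, hm₁1, hgd₁, hwK₁, hL₁, hagree₁, hbr₁⟩ := occdata d k₁ hd₁ hocc₁ hE₁
      obtain ⟨m₂, hm₂1, hgd₂, hwK₂, hL₂, hagree₂, hbr₂⟩ := occdata d' k₂ hd₂ hocc₂ hE₂
      -- the value following the prefix u' in v
      have hn'idx : u'.length = Sf f w K + (R + 1) := by omega
      have he₀a : (∃ (hRa : R + 1 < (f (w K)).length), (f (w K))[R + 1]'hRa = v u'.length) ∨
          ((f (w K)).length = R + 1 ∧ v u'.length = α) := by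
        rcases Nat.lt_or_ge (R + 1) (f (w K)).length with h | h
        · refine Or.inl ⟨h, ?_⟩
          rw [hn'idx]
          exact (v_block hα hch him K (R + 1) h).symm
        · refine Or.inr ⟨by omega, ?_⟩
          rw [hn'idx, show Sf f w K + (R + 1) = Sf f w (K + 1) from by
            rw [Sf_succ]; omega]
          exact v_start hα hch him (K + 1)
      -- building factors of w from the decoded data
      have mkfac : ∀ (g : A) (mm : ℕ), 1 ≤ mm → g = w (mm - 1) →
          (∀ k', k' < K → w (mm + k') = w k') →
          FactorI w (g :: ((List.range K).map w ++ [w (mm + K)])) := by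
        intro g mm h1 h2 h3
        refine ⟨mm - 1, ?_⟩
        intro i hi
        match i with
        | 0 =>
          simp only [List.getElem_cons_zero, Nat.add_zero]
          exact h2
        | i + 1 =>
          rw [List.getElem_cons_succ]
          simp only [List.length_cons, List.length_append, List.length_map,
            List.length_range] at hi
          rcases Nat.lt_or_ge i K with h | h
          · rw [List.getElem_append_left (by simp; omega)]
            simp only [List.getElem_map, List.getElem_range]
            rw [show mm - 1 + (i + 1) = mm + i from by omega]
            exact (h3 i h).symm
          · have hiK : i = K := by simp at hi; omega
            subst hiK
            rw [List.getElem_append_right (by simp : ((List.range i).map w).length ≤ i)]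
            simp only [List.length_map, List.length_range, Nat.sub_self,
              List.getElem_cons_zero]
            rw [show mm - 1 + (i + 1) = mm + i from by omega]
      have lsp_step : ∀ mA mB, 1 ≤ mA → 1 ≤ mB → d = w (mA - 1) → d' = w (mB - 1) →
          (∀ k', k' < K → w (mA + k') = w k') → (∀ k', k' < K → w (mB + k') = w k') →
          w (mA + K) = w (mB + K) → w (mA + K) = w K := by
        intro mA mB h1 h2 h3 h4 h5 h6 heq
        have hf1 := mkfac d mA h1 h3 h5
        have hf2 := mkfac d' mB h2 h4 h6
        rw [← heq] at hf2
        have hpre2 := hw _ d d' hdd' hf1 hf2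
        have h7 := hpre2 K (by simp)
        rw [List.getElem_append_right (by simp : ((List.range K).map w).length ≤ K)] at h7
        simpa using h7
      have hfragpre : PrefI ((List.range K).map w ++ [w K]) w := by
        intro i hi
        simp only [List.length_append, List.length_map, List.length_range,
          List.length_cons, List.length_nil] at hi
        rcases Nat.lt_or_ge i K with h | h
        · rw [List.getElem_append_left (by simp; omega)]
          simp
        · have hiK : i = K := by omega
          subst hiK
          rw [List.getElem_append_right (by simp : ((List.range i).map w).length ≤ i)]
          simp
      have frag : Fragile w (w K) (w (m₁ + K)) (w (m₂ + K)) :=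
        ⟨d, d', hdd', (List.range K).map w, hfragpre,
          mkfac d m₁ hm₁1 hgd₁ hwK₁, mkfac d' m₂ hm₂1 hgd₂ hwK₂⟩
      -- final case analysis
      rcases hbr₁ with ⟨hlen₁, heα1⟩ | ⟨hlt₁, hval₁⟩
      · rcases hbr₂ with ⟨hlen₂, heα2⟩ | ⟨hlt₂, hval₂⟩
        · -- both images equal the tail exactly and e = α
          have hfbc : f (w (m₁ + K)) = f (w (m₂ + K)) := by
            apply List.ext_getElem (by omega)
            intro t h1 h2
            rw [hagree₁ t (by omega), ← hagree₂ t (by omega)]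
          have hbc : w (m₁ + K) = w (m₂ + K) := f_inj hα hch _ _ hfbc
          have hba : w (m₁ + K) = w K :=
            lsp_step m₁ m₂ hm₁1 hm₂1 hgd₁ hgd₂ hwK₁ hwK₂ hbc
          rcases he₀a with ⟨hRa, hv⟩ | ⟨hRa, hv⟩
          · have hll := congrArg List.length (congrArg f hba)
            omega
          · exact hne (by rw [heα1, hv])
        · -- e = α but also e is an internal letter of f c' : contradiction
          exact f_notalpha hα hch (w (m₂ + K)) (R + 1) hlt₂ (by omega) (hval₂.trans heα1)
      · rcases hbr₂ with ⟨hlen₂, heα2⟩ | ⟨hlt₂, hval₂⟩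
        · exact f_notalpha hα hch (w (m₁ + K)) (R + 1) hlt₁ (by omega) (hval₁.trans heα2)
        · -- main case : both continue past the tail with the same letter e
          have hlcpbc : R + 2 ≤ (lcp (f (w (m₁ + K))) (f (w (m₂ + K)))).length := by
            apply le_lcp _ _ (R + 2) (by omega) (by omega)
            intro i h1 h2 hiR
            rcases Nat.lt_or_ge i (R + 1) with h | h
            · rw [hagree₁ i (by omega), ← hagree₂ i (by omega)]
            · have hiR1 : i = R + 1 := by omega
              subst hiR1
              rw [hval₁, ← hval₂]
          by_cases hbc : w (m₁ + K) = w (m₂ + K)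
          · have hba : w (m₁ + K) = w K :=
              lsp_step m₁ m₂ hm₁1 hm₂1 hgd₁ hgd₂ hwK₁ hwK₂ hbc
            rcases he₀a with ⟨hRa, hv⟩ | ⟨hRa, hv⟩
            · apply hne
              rw [← hv, ← hval₁]
              exact List.getElem_of_eq (congrArg f hba) hlt₁
            · have hll := congrArg List.length (congrArg f hba)
              omega
          · -- b' ≠ c' : we get a forbidden triple
            rcases he₀a with ⟨hRa, hv⟩ | ⟨hRa, hv⟩
            · have hne' : (f (w K))[R + 1]'hRa ≠ (f (w (m₁ + K)))[R + 1]'hlt₁ := by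
                rw [hv, hval₁]
                intro hcon
                exact hne hcon.symm
              have hab : w K ≠ w (m₁ + K) := by
                intro hcon
                exact hne' (List.getElem_of_eq (congrArg f hcon) hRa)
              have hac : w K ≠ w (m₂ + K) := by
                intro hcon
                apply hne
                rw [← hv, ← hval₂]
                exact (List.getElem_of_eq (congrArg f hcon) hRa).symm
              have hlcpab : (lcp (f (w K)) (f (w (m₁ + K)))).length ≤ R + 1 :=
                lcp_length_le_of_ne hRa hlt₁ hne'
              exact H (w K) (w (m₁ + K)) (w (m₂ + K)) hab hbc hac frag (by omega)
            · have hab : w K ≠ w (m₁ + K) := by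
                intro hcon
                have := congrArg List.length (congrArg f hcon)
                omega
              have hac : w K ≠ w (m₂ + K) := by
                intro hcon
                have := congrArg List.length (congrArg f hcon)
                omega
              have hlcpab : (lcp (f (w K)) (f (w (m₁ + K)))).length ≤ R + 1 := by
                have := lcp_length_le_left (f (w K)) (f (w (m₁ + K)))
                omega
              exact H (w K) (w (m₁ + K)) (w (m₂ + K)) hab hbc hac frag (by omega)

end CONVERSE

section IMAGE
variable {A : Type*} [DecidableEq A] {f : A → List A} {α : A}
  (hα : f α = [α]) (hch : ∀ β, β ≠ α → ∃ γ, f β = f γ ++ [β]) (w : ℕ → A)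

include hα hch

theorem exists_image : ∃ v : ℕ → A, IsImage f w v := by
  refine ⟨fun i => (((List.range (i + 1)).map w).flatMap f).getD i (w 0), ?_⟩
  intro n i hi
  show (((List.range n).map w).flatMap f)[i]
      = (((List.range (i + 1)).map w).flatMap f).getD i (w 0)
  have hmono : ∀ p q : ℕ, p ≤ q →
      ((List.range p).map w).flatMap f <+: ((List.range q).map w).flatMap f := by
    intro p q hpq
    induction q with
    | zero =>
      have hp : p = 0 := by omega
      subst hp
      exact List.prefix_refl _
    | succ q ihq =>
      rcases Nat.lt_or_ge p (q + 1) with h | h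
      · refine (ihq (by omega)).trans ?_
        refine ⟨f (w q), ?_⟩
        simp [List.range_succ]
      · have hp : p = q + 1 := by omega
        subst hp
        exact List.prefix_refl _
  have hlen : i < (((List.range (i + 1)).map w).flatMap f).length := by
    have h1 : i + 1 ≤ Sf f w (i + 1) := le_Sf hα hch (i + 1)
    have h2 : (((List.range (i + 1)).map w).flatMap f).length = Sf f w (i + 1) := rfl
    omega
  rw [List.getD_eq_getElem _ _ hlen]
  rcases Nat.le_total n (i + 1) with h | h
  · exact (hmono n (i + 1) h).getElem hi
  · exact ((hmono (i + 1) n h).getElem hlen).symm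

end IMAGE


theorem fragility_breaking_tfae {A : Type*} [DecidableEq A] (w : ℕ → A)
    (hw : LSPInf w) (f : A → List A) (hf : IsBLSP f) :
    ((∀ v, IsImage f w v → ¬ LSPInf v) ↔
      ∃ a b c : A, a ≠ b ∧ b ≠ c ∧ a ≠ c ∧ Fragile w a b c ∧
        (lcp (f a) (f b)).length < (lcp (f b) (f c)).length) ∧
    ((∀ v, IsImage f w v → ¬ LSPInf v) ↔
      ∃ a b c : A, a ≠ b ∧ b ≠ c ∧ a ≠ c ∧ Fragile w a b c ∧ Breaking f a b c) := by
  obtain ⟨α, hα, hch⟩ := hf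
  have L1 : ∀ (w' : ℕ → A) (a b c : A), Fragile w' a b c →
      (lcp (f a) (f b)).length < (lcp (f b) (f c)).length →
      ∀ v, IsImage f w' v → ¬ LSPInf v :=
    fun w' a b c hfr hl v him => forward_lemma hα hch him hfr hl
  have L2 : (∀ v, IsImage f w v → ¬ LSPInf v) →
      ∃ a b c : A, a ≠ b ∧ b ≠ c ∧ a ≠ c ∧ Fragile w a b c ∧
        (lcp (f a) (f b)).length < (lcp (f b) (f c)).length := by
    intro hP
    by_contra hQ
    push_neg at hQ
    obtain ⟨v, hv⟩ := exists_image hα hch w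
    exact hP v hv (converse_lemma hα hch hv hw
      (fun a b c h1 h2 h3 h4 => not_lt.mpr (hQ a b c h1 h2 h3 h4)))
  refine ⟨⟨L2, ?_⟩, ⟨?_, ?_⟩⟩
  · rintro ⟨a, b, c, hab, hbc, hac, hfr, hl⟩ v him
    exact L1 w a b c hfr hl v him
  · intro hP
    obtain ⟨a, b, c, hab, hbc, hac, hfr, hl⟩ := L2 hP
    refine ⟨a, b, c, hab, hbc, hac, hfr, ?_⟩
    intro w' hw' hfr' v' him'
    exact L1 w' a b c hfr' hl v' him'
  · rintro ⟨a, b, c, hab, hbc, hac, hfr, hbr⟩ v him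
    exact hbr w hw hfr v him
end

section
/- Let f be a bLSP morphism of A* and let w be an infinite word over A. If the empty word is an (a, b, c, β, γ)-fragility of f(w), then a = first(f) and the words βb and γc are factors of words f(δ) for letters δ occurring in w. -/
section Aux
variable {A : Type*}

lemma pair_infix_append {s t : List A} {x y : A} (h : [x, y] <:+: s ++ t) :
    [x, y] <:+: s ∨ [x, y] <:+: t ∨ [y] <+: t := by
  obtain ⟨p, q, hpq⟩ := h
  by_cases hs : s.length ≤ p.length
  · right; left
    have hdrop : (s ++ t).drop s.length = t := by simp
    have hdrop2 : (p ++ [x, y] ++ q).drop s.length = p.drop s.length ++ [x, y] ++ q := by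
      rw [List.append_assoc, List.drop_append_of_le_length hs, ← List.append_assoc]
    exact ⟨p.drop s.length, q, by rw [← hdrop, ← hpq, hdrop2]⟩
  · push_neg at hs
    by_cases hs2 : p.length + 2 ≤ s.length
    · left
      have hpfx : p ++ [x, y] <+: s := by
        apply List.prefix_of_prefix_length_le (l₃ := s ++ t)
        · exact ⟨q, by simpa [List.append_assoc] using hpq⟩
        · exact ⟨t, rfl⟩
        · simpa using hs2
      exact (List.suffix_append p [x, y]).isInfix.trans hpfx.isInfix
    · right; right
      have hlen : (p ++ [x]).length = s.length := by simp; omega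
      have hd1 : ((p ++ [x]) ++ (y :: q)).drop s.length = y :: q :=
        List.drop_left' hlen
      have hd2 : (p ++ [x, y] ++ q) = (p ++ [x]) ++ (y :: q) := by simp
      have ht : t = y :: q := by
        have := congrArg (List.drop s.length) hpq
        rw [hd2, hd1, List.drop_left] at this
        exact this.symm
      exact ⟨q, by rw [ht]; rfl⟩

lemma pair_infix_flatMap (f : A → List A) (α : A)
    (hhead : ∀ δ, ∃ t, f δ = α :: t) {x y : A} (hy : y ≠ α) :
    ∀ l : List A, [x, y] <:+: l.flatMap f → ∃ δ ∈ l, [x, y] <:+: f δ := by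
  intro l
  induction l with
  | nil => intro h; simp at h
  | cons d l' ih =>
    intro h
    rw [List.flatMap_cons] at h
    rcases pair_infix_append h with h1 | h1 | h1
    · exact ⟨d, by simp, h1⟩
    · obtain ⟨δ, hδ, h2⟩ := ih h1
      exact ⟨δ, by simp [hδ], h2⟩
    · exfalso
      cases l' with
      | nil => simp at h1
      | cons e l'' =>
        obtain ⟨t, ht⟩ := hhead e
        rw [List.flatMap_cons, ht] at h1
        obtain ⟨r, hr⟩ := h1
        simp at hr
        exact hy hr.1

lemma blsp_ne_nil {f : A → List A} {α : A} (h1 : f α = [α])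
    (h2 : ∀ β, β ≠ α → ∃ γ, f β = f γ ++ [β]) (δ : A) : f δ ≠ [] := by
  by_cases hδ : δ = α
  · subst hδ; simp [h1]
  · obtain ⟨γ, hγ⟩ := h2 δ hδ; simp [hγ]

lemma blsp_head {f : A → List A} {α : A} (h1 : f α = [α])
    (h2 : ∀ β, β ≠ α → ∃ γ, f β = f γ ++ [β]) :
    ∀ n δ, (f δ).length ≤ n → ∃ t, f δ = α :: t := by
  intro n
  induction n with
  | zero =>
    intro δ h
    exact absurd (List.length_eq_zero_iff.mp (Nat.le_zero.mp h)) (blsp_ne_nil h1 h2 δ)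
  | succ n ih =>
    intro δ h
    by_cases hδ : δ = α
    · exact ⟨[], by rw [hδ, h1]⟩
    · obtain ⟨γ, hγ⟩ := h2 δ hδ
      have hlen : (f γ).length ≤ n := by
        have := congrArg List.length hγ
        simp at this
        omega
      obtain ⟨t, ht⟩ := ih γ hlen
      exact ⟨t ++ [δ], by rw [hγ, ht]; simp⟩

lemma len_p (f : A → List A) (w : ℕ → A) (hne : ∀ δ, f δ ≠ []) :
    ∀ n, n ≤ (((List.range n).map w).flatMap f).length := by
  intro n
  induction n with
  | zero => simp
  | succ n ih =>
    rw [List.range_succ, List.map_append, List.flatMap_append]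
    have h1 : 0 < (f (w n)).length := List.length_pos_iff.mpr (hne (w n))
    simp only [List.length_append, List.map_cons, List.map_nil, List.flatMap_cons,
      List.flatMap_nil, List.append_nil]
    omega

lemma factor_infix {f : A → List A} {w v : ℕ → A} (hv : IsImage f w v)
    (hne : ∀ δ, f δ ≠ []) {u : List A} (h : FactorI v u) :
    ∃ n, u <:+: ((List.range n).map w).flatMap f := by
  obtain ⟨k, hk⟩ := h
  refine ⟨k + u.length, ?_⟩
  set p := ((List.range (k + u.length)).map w).flatMap f with hp
  have hlen : k + u.length ≤ p.length := len_p f w hne _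
  have hup : u = (p.drop k).take u.length := by
    apply List.ext_getElem
    · simp; omega
    · intro i h1 h2
      have h3 : k + i < p.length := by omega
      rw [List.getElem_take, List.getElem_drop, hk i h1]
      exact (hv _ (k + i) h3).symm
  rw [hup]
  exact ((p.drop k).take_prefix u.length).isInfix.trans (p.drop_suffix k).isInfix

end Aux

theorem new_fragility {A : Type*} (f : A → List A) (hf : IsBLSP f)
    (w v : ℕ → A) (hv : IsImage f w v) (a b c β γ : A)
    (hab : a ≠ b) (hbc : b ≠ c) (hac : a ≠ c) (hβγ : β ≠ γ)
    (hfrag : FragilityAt v [] a b c β γ) :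
    f a = [a] ∧ (∃ δ, (∃ i, w i = δ) ∧ [β, b] <:+: f δ) ∧
      (∃ δ, (∃ i, w i = δ) ∧ [γ, c] <:+: f δ) := by
  obtain ⟨α, h1, h2⟩ := hf
  have hne : ∀ δ, f δ ≠ [] := blsp_ne_nil h1 h2
  have hhead : ∀ δ, ∃ t, f δ = α :: t := fun δ => blsp_head h1 h2 (f δ).length δ le_rfl
  obtain ⟨hpref, hfb, hfc⟩ := hfrag
  simp only [List.nil_append] at hpref hfb hfc
  obtain ⟨t, ht⟩ := hhead (w 0)
  have hp1 : ((List.range 1).map w).flatMap f = α :: t := by rw [List.range_succ]; simp [ht]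
  have hv0 : v 0 = α := by
    have h := hv 1 0 (by rw [hp1]; simp)
    simp only [hp1, List.getElem_cons_zero] at h
    exact h.symm
  have ha : a = α := by
    have := hpref 0 (by simp)
    simpa [hv0] using this
  subst ha
  refine ⟨h1, ?_, ?_⟩
  · obtain ⟨n, hn⟩ := factor_infix hv hne hfb
    obtain ⟨δ, hδ, hinf⟩ := pair_infix_flatMap f a hhead (Ne.symm hab) _ hn
    simp only [List.mem_map, List.mem_range] at hδ
    obtain ⟨i, _, hi⟩ := hδ
    exact ⟨δ, ⟨i, hi⟩, hinf⟩
  · obtain ⟨n, hn⟩ := factor_infix hv hne hfc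
    obtain ⟨δ, hδ, hinf⟩ := pair_infix_flatMap f a hhead (Ne.symm hac) _ hn
    simp only [List.mem_map, List.mem_range] at hδ
    obtain ⟨i, _, hi⟩ := hδ
    exact ⟨δ, ⟨i, hi⟩, hinf⟩
end

section
/- Let f be a bLSP morphism of A*, let w be an infinite word over A, and suppose a non-empty finite word u is an (a, b, c, β, γ)-fragility of f(w). Then there exist letters a', b', c' occurring in w and a finite word v such that: v is an (a', b', c', β, γ)-fragility of w (in particular a', b', c' are pairwise distinct), |v| < |u|, f(v) is a proper prefix of u, and the words ua, βub, γuc are respectively prefixes of f(va')α, βf(vb')α, γf(vc')α, where α = first(f). -/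
section Aux
variable {A : Type*} {f : A → List A} {α : A}

lemma blsp_ne_nil_s14 (hf : IsBLSP f) (x : A) : f x ≠ [] := by
  obtain ⟨α, hα, h⟩ := hf
  by_cases hx : x = α
  · simp [hx, hα]
  · obtain ⟨γ, hγ⟩ := h x hx
    simp [hγ]

lemma blsp_step (hf : IsBLSP f) (hα : f α = [α]) :
    ∀ x, x ≠ α → ∃ γ, f x = f γ ++ [x] := by
  obtain ⟨α', hα', h⟩ := hf
  rcases eq_or_ne α α' with rfl | hne
  · exact h
  · exfalso
    obtain ⟨γ, hγ⟩ := h α hne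
    rw [hα] at hγ
    have hlen := congrArg List.length hγ
    simp at hlen
    exact blsp_ne_nil_s14 ⟨α', hα', h⟩ γ hlen

lemma blsp_alpha_pos (hf : IsBLSP f) (hα : f α = [α]) :
    ∀ (x : A) (i : ℕ) (h : i < (f x).length), ((f x)[i] = α ↔ i = 0) := by
  have hstep := blsp_step hf hα
  have hnil := blsp_ne_nil_s14 hf
  suffices H : ∀ N (x : A), (f x).length ≤ N →
      ∀ (i : ℕ) (h : i < (f x).length), ((f x)[i] = α ↔ i = 0) by
    exact fun x => H (f x).length x le_rfl
  intro N
  induction N with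
  | zero =>
    intro x hx i h
    omega
  | succ N ih =>
    intro x hx i h
    by_cases hxa : x = α
    · have hfx : f x = [α] := by rw [hxa, hα]
      have h1 : i = 0 := by
        have h' := h
        simp [hfx] at h'
        omega
      subst h1
      simp [hfx]
    · obtain ⟨γ, hγ⟩ := hstep x hxa
      have hγlen : (f γ).length + 1 = (f x).length := by rw [hγ]; simp
      have hγnil : f γ ≠ [] := hnil γ
      have hγpos : 0 < (f γ).length := List.length_pos_iff.mpr hγnil
      by_cases hi : i < (f γ).length
      · have heq : (f x)[i]'h = (f γ)[i]'hi := by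
          simp only [hγ]
          exact List.getElem_append_left hi
        rw [heq]
        exact ih γ (by omega) i hi
      · have hieq : i = (f γ).length := by omega
        have heq : (f x)[i]'h = x := by
          simp only [hγ]
          rw [List.getElem_append_right (by omega)]
          simp [hieq]
        rw [heq]
        constructor
        · intro hh; exact absurd hh hxa
        · intro hh; omega

lemma blsp_last (hf : IsBLSP f) (hα : f α = [α]) (x : A) (i : ℕ)
    (h : i + 1 = (f x).length) : (f x)[i]'(by omega) = x := by
  by_cases hxa : x = α
  · have hfx : f x = [α] := by rw [hxa, hα]
    have h1 : i = 0 := by simp [hfx] at h; omega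
    subst h1
    simp [hxa, hα]
  · obtain ⟨γ, hγ⟩ := blsp_step hf hα x hxa
    have hlen : i = (f γ).length := by
      have := congrArg List.length hγ
      simp at this; omega
    simp only [hγ]
    rw [List.getElem_append_right (by omega)]
    simp [hlen]
variable {w v : ℕ → A}

def Lf (f : A → List A) (w : ℕ → A) (n : ℕ) : List A := ((List.range n).map w).flatMap f
def pf (f : A → List A) (w : ℕ → A) (n : ℕ) : ℕ := (Lf f w n).length

lemma Lf_succ (n : ℕ) : Lf f w (n+1) = Lf f w n ++ f (w n) := by
  simp [Lf, List.range_succ]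

lemma pf_zero : pf f w 0 = 0 := by simp [pf, Lf]

lemma pf_succ (n : ℕ) : pf f w (n+1) = pf f w n + (f (w n)).length := by
  simp [pf, Lf_succ]

lemma pf_mono (hf : IsBLSP f) : StrictMono (pf f w) := by
  apply strictMono_nat_of_lt_succ
  intro n
  have h1 : 0 < (f (w n)).length := List.length_pos_iff.mpr (blsp_ne_nil_s14 hf (w n))
  rw [pf_succ]; omega

lemma pf_le (hf : IsBLSP f) (n : ℕ) : n ≤ pf f w n := (pf_mono hf).le_apply

lemma v_block_s14 (hv : IsImage f w v) (n : ℕ) (i : ℕ) (h : i < (f (w n)).length) :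
    v (pf f w n + i) = (f (w n))[i] := by
  have H : PrefI (Lf f w (n+1)) v := hv (n+1)
  have hlen : pf f w n + i < (Lf f w (n+1)).length := by
    have h2 : pf f w (n+1) = pf f w n + (f (w n)).length := pf_succ n
    show pf f w n + i < pf f w (n+1)
    omega
  have h3 := H (pf f w n + i) hlen
  rw [← h3]
  simp only [Lf_succ]
  rw [List.getElem_append _, dif_neg (by show ¬ (pf f w n + i < pf f w n); omega)]
  congr 1
  show pf f w n + i - pf f w n = i
  omega

lemma v_pref (hv : IsImage f w v) (n : ℕ) (i : ℕ) (h : i < pf f w n) :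
    (Lf f w n)[i]'h = v i := hv n i h

lemma exists_block_s14 (hf : IsBLSP f) (j : ℕ) :
    ∃ n, pf f w n ≤ j ∧ j < pf f w (n+1) := by
  induction j with
  | zero =>
    refine ⟨0, le_of_eq pf_zero, ?_⟩
    have h1 : pf f w 0 < pf f w 1 := pf_mono hf (by omega)
    rw [pf_zero] at h1
    exact h1
  | succ j ih =>
    obtain ⟨n, h1, h2⟩ := ih
    by_cases h : j + 1 < pf f w (n+1)
    · exact ⟨n, by omega, h⟩
    · have h3 : pf f w (n+1) < pf f w (n+1+1) := pf_mono hf (by omega)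
      exact ⟨n+1, by omega, by omega⟩

lemma alpha_iff (hf : IsBLSP f) (hα : f α = [α]) (hv : IsImage f w v) (j : ℕ) :
    v j = α ↔ ∃ n, pf f w n = j := by
  obtain ⟨n, h1, h2⟩ := exists_block_s14 (w := w) hf j
  have hps := pf_succ (f := f) (w := w) n
  have hlen : j - pf f w n < (f (w n)).length := by omega
  have hval : v j = (f (w n))[j - pf f w n] := by
    have h3 := v_block_s14 hv n (j - pf f w n) hlen
    rw [show pf f w n + (j - pf f w n) = j from by omega] at h3
    exact h3
  rw [hval, blsp_alpha_pos hf hα (w n) _ hlen]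
  constructor
  · intro hz; exact ⟨n, by omega⟩
  · rintro ⟨m, rfl⟩
    have hmono := pf_mono (w := w) hf
    have hm1 : n ≤ m := by
      by_contra hc
      have : pf f w m < pf f w n := hmono (by omega)
      omega
    have hm2 : m ≤ n := by
      by_contra hc
      have : pf f w (n+1) ≤ pf f w m := hmono.le_iff_le.mpr (by omega)
      omega
    have : m = n := le_antisymm hm2 hm1
    subst this; omega

lemma last_letter (hf : IsBLSP f) (hα : f α = [α]) (hv : IsImage f w v) (n : ℕ) :
    v (pf f w (n+1) - 1) = w n := by
  have hpos : 0 < (f (w n)).length := List.length_pos_iff.mpr (blsp_ne_nil_s14 hf (w n))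
  have hs := pf_succ (f := f) (w := w) n
  have h1 : pf f w (n+1) - 1 = pf f w n + ((f (w n)).length - 1) := by omega
  rw [h1, v_block_s14 hv n _ (by omega)]
  exact blsp_last hf hα (w n) _ (by omega)

lemma main_occ (hf : IsBLSP f) (hα : f α = [α]) (hv : IsImage f w v)
    (u : List A) (hu0 : ∀ i (h : i < u.length), u[i] = v i)
    (n : ℕ) (hn1 : pf f w n < u.length) (hn2 : u.length ≤ pf f w (n+1))
    (s : ℕ) (hs : ∀ i (h : i < u.length), u[i] = v (pf f w s + i))
    (d : A) (hd : d = v (pf f w s + u.length)) :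
    (∀ j, j < n → w (s + j) = w j) ∧
    (u.drop (pf f w n) ++ [d]) <+: (f (w (s + n)) ++ [α]) := by
  have hmono := pf_mono (w := w) hf
  have hnoα : ∀ q, ¬(∃ m, pf f w m = q) → q < u.length → v (pf f w s + q) ≠ α := by
    intro q hq hql hcon
    rw [← hs q hql, hu0 q hql] at hcon
    exact hq ((alpha_iff hf hα hv q).mp hcon)
  have sync : ∀ j, j ≤ n → pf f w (s + j) = pf f w s + pf f w j := by
    intro j
    induction j with
    | zero => intro _; simp [pf_zero]
    | succ j ih =>
      intro hj
      have hprev := ih (by omega)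
      have hjn : pf f w (j+1) ≤ pf f w n := hmono.le_iff_le.mpr (by omega)
      have hju : pf f w (j+1) < u.length := by omega
      have hα1 : v (pf f w s + pf f w (j+1)) = α := by
        rw [← hs _ hju, hu0 _ hju]
        exact (alpha_iff hf hα hv _).mpr ⟨j+1, rfl⟩
      obtain ⟨m, hm⟩ := (alpha_iff hf hα hv _).mp hα1
      have hjj : pf f w j < pf f w (j+1) := hmono (by omega)
      have hm1 : s + j < m := by
        by_contra hc
        have : pf f w m ≤ pf f w (s+j) := hmono.le_iff_le.mpr (by omega)
        omega
      have hm2 : pf f w (s+j+1) ≤ pf f w m := hmono.le_iff_le.mpr (by omega)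
      rcases lt_or_eq_of_le hm2 with hlt | heq
      · exfalso
        have hsj : pf f w (s+j) < pf f w (s+j+1) := hmono (by omega)
        set q := pf f w (s+j+1) - pf f w s with hq
        have hq1 : pf f w (s+j+1) = pf f w s + q := by omega
        have hvq : v (pf f w s + q) = α := by
          rw [← hq1]; exact (alpha_iff hf hα hv _).mpr ⟨s+j+1, rfl⟩
        apply hnoα q ?_ (by omega) hvq
        rintro ⟨m', hm'⟩
        have hgt : j < m' := hmono.lt_iff_lt.mp (by omega)
        have hlt2 : m' < j+1 := hmono.lt_iff_lt.mp (by omega)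
        omega
      · show pf f w (s + (j+1)) = pf f w s + pf f w (j+1)
        rw [show s + (j+1) = s + j + 1 from rfl, heq, hm]
  have hsn := sync n le_rfl
  have hfpos : 0 < (f (w (s+n))).length := List.length_pos_iff.mpr (blsp_ne_nil_s14 hf (w (s+n)))
  have hss : pf f w (s+n+1) = pf f w (s+n) + (f (w (s+n))).length := pf_succ _
  have hblock : u.length ≤ pf f w n + (f (w (s+n))).length := by
    by_contra hc
    push_neg at hc
    set q := pf f w n + (f (w (s+n))).length with hq
    have hvq : v (pf f w s + q) = α := by
      rw [show pf f w s + q = pf f w (s+n+1) from by omega]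
      exact (alpha_iff hf hα hv _).mpr ⟨s+n+1, rfl⟩
    apply hnoα q ?_ (by omega) hvq
    rintro ⟨m', hm'⟩
    have hgt : n < m' := hmono.lt_iff_lt.mp (by omega)
    have hlt2 : m' < n+1 := hmono.lt_iff_lt.mp (by omega)
    omega
  constructor
  · intro j hj
    have h1 := last_letter hf hα hv (s + j)
    have h2 := last_letter hf hα hv j
    have hsync := sync (j+1) (by omega)
    have hjn : pf f w (j+1) ≤ pf f w n := hmono.le_iff_le.mpr (by omega)
    have hpos : pf f w j < pf f w (j+1) := hmono (by omega)
    have hq : pf f w (j+1) - 1 < u.length := by omega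
    have e1 : pf f w (s+j+1) - 1 = pf f w s + (pf f w (j+1) - 1) := by
      rw [show s + j + 1 = s + (j+1) from rfl, hsync]
      omega
    rw [← h1, ← h2, e1, ← hs _ hq, hu0 _ hq]
  · set z := u.drop (pf f w n) with hz
    have hzl : z.length = u.length - pf f w n := by simp [hz]
    have hzel : ∀ (i : ℕ), (hi : i < z.length) →
        z[i] = (f (w (s+n)))[i]'(by omega) := by
      intro i hi
      have hiu : pf f w n + i < u.length := by omega
      have e2 : z[i] = u[pf f w n + i] := by
        simp [hz]
      rw [e2, hs _ hiu]
      rw [show pf f w s + (pf f w n + i) = pf f w (s+n) + i from by omega]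
      exact v_block_s14 hv (s+n) i (by omega)
    have hdval : pf f w s + u.length = pf f w (s+n) + z.length := by omega
    rcases lt_or_eq_of_le hblock with hlt | heq'
    · apply List.IsPrefix.trans (l₂ := f (w (s+n))) ?_ (List.prefix_append _ _)
      rw [List.prefix_iff_eq_take]
      apply List.ext_getElem
      · simp
        omega
      · intro i h₁ h₂
        rw [List.getElem_take]
        by_cases hi : i < z.length
        · rw [List.getElem_append_left hi]
          exact hzel i hi
        · have hiz : i = z.length := by simp at h₁; omega
          rw [List.getElem_append_right (by omega)]
          simp only [hiz, Nat.sub_self]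
          show d = _
          conv_lhs => rw [hd, hdval]
          exact v_block_s14 hv (s+n) z.length (by omega)
    · have hzf : z = f (w (s+n)) := by
        apply List.ext_getElem (by omega)
        intro i h₁ h₂
        exact hzel i h₁
      have hdα : d = α := by
        rw [hd]
        apply (alpha_iff hf hα hv _).mpr ⟨s+n+1, ?_⟩
        omega
      rw [hzf, hdα]

end Aux

theorem propagated_fragility {A : Type*} (f : A → List A) (hf : IsBLSP f)
    (α : A) (hα : f α = [α]) (w v : ℕ → A) (hv : IsImage f w v)
    (a b c β γ : A) (hab : a ≠ b) (hbc : b ≠ c) (hac : a ≠ c) (hβγ : β ≠ γ)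
    (u : List A) (hu : u ≠ []) (hfrag : FragilityAt v u a b c β γ) :
    ∃ (a' b' c' : A) (v' : List A),
      (∃ i, w i = a') ∧ (∃ i, w i = b') ∧ (∃ i, w i = c') ∧
      a' ≠ b' ∧ b' ≠ c' ∧ a' ≠ c' ∧
      FragilityAt w v' a' b' c' β γ ∧
      v'.length < u.length ∧
      (v'.flatMap f <+: u ∧ v'.flatMap f ≠ u) ∧
      (u ++ [a]) <+: (v'.flatMap f ++ f a' ++ [α]) ∧
      (β :: (u ++ [b])) <+: (β :: (v'.flatMap f ++ f b' ++ [α])) ∧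
      (γ :: (u ++ [c])) <+: (γ :: (v'.flatMap f ++ f c' ++ [α])) := by
  obtain ⟨hpref, hfb, hfc⟩ := hfrag
  have hmono := pf_mono (w := w) hf
  have hulen : 0 < u.length := List.length_pos_iff.mpr hu
  have hu0 : ∀ i (h : i < u.length), u[i] = v i := by
    intro i h
    have h2 := hpref i (by simp; omega)
    rwa [List.getElem_append_left h] at h2
  have ha : a = v u.length := by
    have h2 := hpref u.length (by simp)
    rw [List.getElem_append_right (le_refl _)] at h2
    simpa using h2
  obtain ⟨n, hn1', hn2'⟩ := exists_block_s14 (w := w) hf (u.length - 1)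
  have hn1 : pf f w n < u.length := by omega
  have hn2 : u.length ≤ pf f w (n+1) := by omega
  have hv0α : v 0 = α := (alpha_iff hf hα hv 0).mpr ⟨0, pf_zero⟩
  -- prefix occurrence (s = 0)
  have hs0 : ∀ i (h : i < u.length), u[i] = v (pf f w 0 + i) := by
    intro i h
    rw [pf_zero, Nat.zero_add]
    exact hu0 i h
  have hd0 : a = v (pf f w 0 + u.length) := by
    rw [pf_zero, Nat.zero_add]; exact ha
  obtain ⟨-, hprefa⟩ := main_occ hf hα hv u hu0 n hn1 hn2 0 hs0 a hd0
  rw [Nat.zero_add] at hprefa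
  -- a generic treatment of the two factor occurrences
  have occ : ∀ (δ d : A), FactorI v (δ :: (u ++ [d])) →
      ∃ n₁, 0 < n₁ ∧ δ = w (n₁ - 1) ∧
        (∀ j, j < n → w (n₁ + j) = w j) ∧
        (u.drop (pf f w n) ++ [d]) <+: (f (w (n₁ + n)) ++ [α]) := by
    intro δ d hfact
    obtain ⟨k, hk⟩ := hfact
    have hkδ : δ = v k := by simpa using hk 0 (by simp)
    have hkub : ∀ i (h : i < u.length), u[i] = v (k + 1 + i) := by
      intro i h
      have h2 := hk (i+1) (by simp; omega)
      rw [List.getElem_cons_succ, List.getElem_append_left h] at h2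
      rwa [show k + (i+1) = k + 1 + i from by omega] at h2
    have hkd : d = v (k + 1 + u.length) := by
      have h2 := hk (u.length + 1) (by simp)
      rw [List.getElem_cons_succ, List.getElem_append_right (le_refl _)] at h2
      rw [show k + (u.length + 1) = k + 1 + u.length from by omega] at h2
      simpa using h2
    have hvk1 : v (k+1) = α := by
      have h2 := hkub 0 hulen
      rw [hu0 0 hulen, hv0α] at h2
      exact h2.symm
    obtain ⟨n₁, hn₁⟩ := (alpha_iff hf hα hv (k+1)).mp hvk1
    have hn₁pos : 0 < n₁ := by
      by_contra hc
      have h3 : n₁ = 0 := by omega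
      rw [h3, pf_zero] at hn₁
      omega
    have hsb : ∀ i (h : i < u.length), u[i] = v (pf f w n₁ + i) := by
      intro i h; rw [hn₁]; exact hkub i h
    have hdb : d = v (pf f w n₁ + u.length) := by rw [hn₁]; exact hkd
    obtain ⟨hletters, hprefd⟩ := main_occ hf hα hv u hu0 n hn1 hn2 n₁ hsb d hdb
    refine ⟨n₁, hn₁pos, ?_, hletters, hprefd⟩
    have h4 := last_letter hf hα hv (n₁ - 1)
    rw [show n₁ - 1 + 1 = n₁ from by omega, hn₁, show k + 1 - 1 = k from by omega] at h4
    rw [hkδ]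
    exact h4
  obtain ⟨n₁, hn₁pos, hβw, hlettersb, hprefb⟩ := occ β b hfb
  obtain ⟨n₂, hn₂pos, hγw, hlettersc, hprefc⟩ := occ γ c hfc
  -- the desubstituted word
  have hLfu : Lf f w n = u.take (pf f w n) := by
    apply List.ext_getElem
    · rw [List.length_take]
      show pf f w n = min (pf f w n) u.length
      omega
    · intro i h₁ h₂
      rw [List.getElem_take]
      have hi : i < pf f w n := h₁
      refine (v_pref hv n i hi).trans ?_
      exact (hu0 i (by omega)).symm
  have hflat : ((List.range n).map w).flatMap f = Lf f w n := rfl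
  -- distinctness
  have key : ∀ (x y d₁ d₂ : A), (u.drop (pf f w n) ++ [d₁]) <+: (f x ++ [α]) →
      (u.drop (pf f w n) ++ [d₂]) <+: (f y ++ [α]) → x = y → d₁ = d₂ := by
    intro x y d₁ d₂ h1 h2 hxy
    subst hxy
    have hlen : (u.drop (pf f w n) ++ [d₁]).length = (u.drop (pf f w n) ++ [d₂]).length := by
      simp
    have heq : u.drop (pf f w n) ++ [d₁] = u.drop (pf f w n) ++ [d₂] := by
      rcases List.prefix_or_prefix_of_prefix h1 h2 with h | h
      · exact h.eq_of_length hlen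
      · exact (h.eq_of_length hlen.symm).symm
    simpa using List.append_cancel_left heq
  have hprefix_lift : ∀ (x d₀ : A), (u.drop (pf f w n) ++ [d₀]) <+: (f x ++ [α]) →
      (u ++ [d₀]) <+: (((List.range n).map w).flatMap f ++ f x ++ [α]) := by
    intro x d₀ h1
    rw [hflat, List.append_assoc]
    have hu_split : u = Lf f w n ++ u.drop (pf f w n) := by
      conv_lhs => rw [← List.take_append_drop (pf f w n) u]
      rw [hLfu]
    calc u ++ [d₀] = Lf f w n ++ (u.drop (pf f w n) ++ [d₀]) := by
          rw [← List.append_assoc, ← hu_split]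
      _ <+: Lf f w n ++ (f x ++ [α]) := (List.prefix_append_right_inj _).mpr h1
  refine ⟨w n, w (n₁ + n), w (n₂ + n), (List.range n).map w,
    ⟨n, rfl⟩, ⟨n₁ + n, rfl⟩, ⟨n₂ + n, rfl⟩,
    fun h => hab (key _ _ a b hprefa hprefb h),
    fun h => hbc (key _ _ b c hprefb hprefc h),
    fun h => hac (key _ _ a c hprefa hprefc h),
    ⟨?_, ?_, ?_⟩, ?_, ⟨?_, ?_⟩, ?_, ?_, ?_⟩
  · -- PrefI ((List.range n).map w ++ [w n]) w
    intro i hi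
    have hi' : i < n + 1 := by simpa using hi
    by_cases hin : i < n
    · rw [List.getElem_append_left (by simpa using hin)]
      simp
    · have h3 : i = n := by omega
      subst h3
      rw [List.getElem_append_right (by simp)]
      simp
  · -- FactorI w (β :: ((List.range n).map w ++ [w (n₁ + n)]))
    refine ⟨n₁ - 1, ?_⟩
    intro i hi
    match i with
    | 0 => simpa using hβw
    | (j+1) =>
      rw [show n₁ - 1 + (j + 1) = n₁ + j from by omega]
      rw [List.getElem_cons_succ]
      have hj : j < n + 1 := by simp at hi; omega
      by_cases hjn : j < n
      · rw [List.getElem_append_left (by simpa using hjn)]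
        simpa using (hlettersb j hjn).symm
      · have h3 : j = n := by omega
        subst h3
        rw [List.getElem_append_right (by simp)]
        simp
  · -- FactorI w (γ :: ((List.range n).map w ++ [w (n₂ + n)]))
    refine ⟨n₂ - 1, ?_⟩
    intro i hi
    match i with
    | 0 => simpa using hγw
    | (j+1) =>
      rw [show n₂ - 1 + (j + 1) = n₂ + j from by omega]
      rw [List.getElem_cons_succ]
      have hj : j < n + 1 := by simp at hi; omega
      by_cases hjn : j < n
      · rw [List.getElem_append_left (by simpa using hjn)]
        simpa using (hlettersc j hjn).symm
      · have h3 : j = n := by omega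
        subst h3
        rw [List.getElem_append_right (by simp)]
        simp
  · -- length
    have := pf_le (w := w) hf n
    simpa using by omega
  · -- flatMap prefix
    rw [hflat, hLfu]
    exact List.take_prefix _ _
  · -- flatMap ≠ u
    intro hcon
    rw [hflat] at hcon
    have := congrArg List.length hcon
    have h5 : pf f w n = u.length := this
    omega
  · exact hprefix_lift (w n) a hprefa
  · rw [List.cons_prefix_cons]
    exact ⟨rfl, hprefix_lift (w (n₁ + n)) b hprefb⟩
  · rw [List.cons_prefix_cons]
    exact ⟨rfl, hprefix_lift (w (n₂ + n)) c hprefc⟩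
end

section
/- Let w, w', w'' be infinite LSP words over a finite alphabet A and let f, g be bLSP morphisms of A* with w = f(w') and w' = g(w''). For an infinite LSP word x, let Frag(x) denote the set of 5-tuples (a, b, c, β, γ) of letters such that x is (a, b, c, β, γ)-fragile. Then the triple ((alph(w), f, Frag(w)), f, (alph(w'), g, Frag(w'))) is a transition of the automaton A_bLSP. -/
/-- A state of the automaton `A_bLSP`: a sub-alphabet, a morphism and
a set of 5-tuples of letters (representing fragilities). -/
structure StateB (A : Type*) where
  alph : Set A
  mor : A → List A
  frag : Set (A × A × A × A × A)

/-- `(q, f, q')` is a transition of the automaton `A_bLSP`. -/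
def Transition {A : Type*} (q : StateB A) (f : A → List A) (q' : StateB A) : Prop :=
  IsBLSP f ∧
  f = q.mor ∧
  q.alph = {x | ∃ β ∈ q'.alph, x ∈ f β} ∧
  (∀ a b c β γ : A, (a, b, c, β, γ) ∈ q'.frag → ¬ Breaking f a b c) ∧
  (∀ a b c β γ : A, (a, b, c, β, γ) ∈ q.frag ↔
    (a ∈ q.alph ∧ b ∈ q.alph ∧ c ∈ q.alph ∧ β ∈ q.alph ∧ γ ∈ q.alph ∧
     a ≠ b ∧ b ≠ c ∧ a ≠ c ∧ β ≠ γ ∧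
     ((f a = [a] ∧ (∃ δ ∈ q'.alph, [β, b] <:+: f δ) ∧ (∃ δ ∈ q'.alph, [γ, c] <:+: f δ)) ∨
      (∃ a' b' c' : A, (a', b', c', β, γ) ∈ q'.frag ∧
        ∃ (x : List A) (α : A), f α = [α] ∧
          x ++ [a] <+: f a' ++ [α] ∧ x ++ [b] <+: f b' ++ [α] ∧
          x ++ [c] <+: f c' ++ [α]))))

/-- The set of 5-tuples `(a, b, c, β, γ)` such that `w` is `(a, b, c, β, γ)`-fragile. -/
def FragSet {A : Type*} (w : ℕ → A) : Set (A × A × A × A × A) :=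
  {t | t.1 ≠ t.2.1 ∧ t.2.1 ≠ t.2.2.1 ∧ t.1 ≠ t.2.2.1 ∧ t.2.2.2.1 ≠ t.2.2.2.2 ∧
    ∃ u, FragilityAt w u t.1 t.2.1 t.2.2.1 t.2.2.2.1 t.2.2.2.2}


namespace BLSPAux

variable {A : Type*}

/-- Structure of bLSP morphisms: images are nonempty, start with `α`, end with
the letter itself, and contain `α` only at position 0. -/
lemma blsp_main (f : A → List A) (α : A) (hα : f α = [α])
    (hstep : ∀ β, β ≠ α → ∃ γ, f β = f γ ++ [β]) :
    ∀ β : A, (f β).head? = some α ∧ (f β).getLast? = some β ∧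
      ∀ i, 0 < i → (f β)[i]? ≠ some α := by
  suffices h : ∀ n (β : A), (f β).length ≤ n → ((f β).head? = some α ∧
      (f β).getLast? = some β ∧ ∀ i, 0 < i → (f β)[i]? ≠ some α) by
    exact fun β => h (f β).length β le_rfl
  intro n
  induction n with
  | zero =>
    intro β hβ
    exfalso
    by_cases hβα : β = α
    · subst hβα; rw [hα] at hβ; simp at hβ
    · obtain ⟨γ, hγ⟩ := hstep β hβα
      rw [hγ] at hβ; simp at hβ
  | succ n ih =>
    intro β hβ
    by_cases hβα : β = α
    · subst hβα
      refine ⟨by rw [hα]; rfl, by rw [hα]; rfl, ?_⟩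
      intro i hi
      rw [hα]
      intro hc
      rw [List.getElem?_eq_some_iff] at hc
      obtain ⟨h1, _⟩ := hc
      simp at h1; omega
    · obtain ⟨γ, hγ⟩ := hstep β hβα
      have hlen : (f γ).length ≤ n := by
        have : (f β).length = (f γ).length + 1 := by rw [hγ]; simp
        omega
      obtain ⟨ihh, ihl, ihi⟩ := ih γ hlen
      have hγne : f γ ≠ [] := by
        intro hc; rw [hc] at ihh; simp at ihh
      have hγpos : 0 < (f γ).length := List.length_pos_iff.mpr hγne
      refine ⟨?_, ?_, ?_⟩
      · rw [hγ, List.head?_append]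
        rw [List.head?_eq_getElem?] at ihh ⊢
        rw [ihh]; rfl
      · rw [hγ, List.getLast?_concat]
      · intro i hi
        rw [hγ]
        rcases lt_trichotomy i (f γ).length with h | h | h
        · rw [List.getElem?_append_left h]
          exact ihi i hi
        · rw [List.getElem?_append_right h.ge, h]
          simp
          exact fun hc => hβα hc
        · rw [List.getElem?_append_right h.le]
          have : i - (f γ).length ≥ 1 := by omega
          intro hc
          rw [List.getElem?_eq_some_iff] at hc
          obtain ⟨h1, _⟩ := hc
          simp at h1; omega

lemma blsp_ne_nil (f : A → List A) (α : A) (hα : f α = [α])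
    (hstep : ∀ β, β ≠ α → ∃ γ, f β = f γ ++ [β]) (β : A) : f β ≠ [] := by
  intro hc
  have := (blsp_main f α hα hstep β).1
  rw [hc] at this; simp at this

lemma blsp_length_pos (f : A → List A) (α : A) (hα : f α = [α])
    (hstep : ∀ β, β ≠ α → ∃ γ, f β = f γ ++ [β]) (β : A) : 0 < (f β).length :=
  List.length_pos_iff.mpr (blsp_ne_nil f α hα hstep β)

lemma blsp_head (f : A → List A) (α : A) (hα : f α = [α])
    (hstep : ∀ β, β ≠ α → ∃ γ, f β = f γ ++ [β]) (β : A) :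
    (f β)[0]? = some α := by
  have := (blsp_main f α hα hstep β).1
  rwa [List.head?_eq_getElem?] at this

lemma blsp_last (f : A → List A) (α : A) (hα : f α = [α])
    (hstep : ∀ β, β ≠ α → ∃ γ, f β = f γ ++ [β]) (β : A) :
    (f β)[(f β).length - 1]? = some β := by
  have := (blsp_main f α hα hstep β).2.1
  rwa [List.getLast?_eq_getElem?] at this

lemma blsp_interior (f : A → List A) (α : A) (hα : f α = [α])
    (hstep : ∀ β, β ≠ α → ∃ γ, f β = f γ ++ [β]) (β : A) (i : ℕ) (hi : 0 < i)
    (h : i < (f β).length) : (f β)[i] ≠ α := by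
  intro hc
  exact (blsp_main f α hα hstep β).2.2 i hi
    (List.getElem?_eq_some_iff.mpr ⟨h, hc⟩)

lemma blsp_uniq (f : A → List A) (α : A) (hα : f α = [α])
    (hstep : ∀ β, β ≠ α → ∃ γ, f β = f γ ++ [β]) (a : A) (ha : f a = [a]) : a = α := by
  have := blsp_head f α hα hstep a
  rw [ha] at this
  simpa using Option.some_inj.mp this

lemma blsp_inj (f : A → List A) (α : A) (hα : f α = [α])
    (hstep : ∀ β, β ≠ α → ∃ γ, f β = f γ ++ [β]) (a b : A) (h : f a = f b) : a = b := by
  have h1 := (blsp_main f α hα hstep a).2.1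
  have h2 := (blsp_main f α hα hstep b).2.1
  rw [h] at h1
  rw [h1] at h2
  exact Option.some_inj.mp h2


/-- Cumulative length of the first `n` blocks. -/
def Sfun (f : A → List A) (w' : ℕ → A) (n : ℕ) : ℕ :=
  (((List.range n).map w').flatMap f).length

lemma Sfun_zero (f : A → List A) (w' : ℕ → A) : Sfun f w' 0 = 0 := by
  simp [Sfun]

lemma Sfun_succ (f : A → List A) (w' : ℕ → A) (n : ℕ) :
    Sfun f w' (n + 1) = Sfun f w' n + (f (w' n)).length := by
  simp [Sfun, List.range_succ]

section Word

variable {f : A → List A} {α : A} {w' w : ℕ → A}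

/-- Reading a block of `w`. -/
lemma blk (hwf : IsImage f w' w) (n j : ℕ) (hj : j < (f (w' n)).length) :
    w (Sfun f w' n + j) = (f (w' n))[j] := by
  have h := hwf (n + 1)
  have hL : ((List.range (n+1)).map w').flatMap f
      = ((List.range n).map w').flatMap f ++ f (w' n) := by
    rw [List.range_succ, List.map_append, List.flatMap_append]
    simp
  have hlen : Sfun f w' n + j < (((List.range (n+1)).map w').flatMap f).length := by
    show Sfun f w' n + j < Sfun f w' (n+1)
    rw [Sfun_succ]; omega
  have hpl : (((List.range n).map w').flatMap f).length = Sfun f w' n := rfl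
  have h2 := h (Sfun f w' n + j) hlen
  rw [← h2, List.getElem_of_eq hL, List.getElem_append_right (by omega)]
  congr 1
  omega

lemma Sfun_lt_succ (hα : f α = [α]) (hstep : ∀ β, β ≠ α → ∃ γ, f β = f γ ++ [β])
    (n : ℕ) : Sfun f w' n < Sfun f w' (n + 1) := by
  rw [Sfun_succ]
  have := blsp_length_pos f α hα hstep (w' n)
  omega

lemma Sfun_mono (hα : f α = [α]) (hstep : ∀ β, β ≠ α → ∃ γ, f β = f γ ++ [β]) :
    StrictMono (Sfun f w') :=
  strictMono_nat_of_lt_succ (Sfun_lt_succ hα hstep)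

lemma findBlock (hα : f α = [α]) (hstep : ∀ β, β ≠ α → ∃ γ, f β = f γ ++ [β]) (i : ℕ) :
    ∃ n, Sfun f w' n ≤ i ∧ i < Sfun f w' (n + 1) := by
  induction i with
  | zero =>
    refine ⟨0, le_of_eq (Sfun_zero f w'), ?_⟩
    have := Sfun_lt_succ (w' := w') hα hstep 0
    rw [Sfun_zero] at this
    omega
  | succ i ih =>
    obtain ⟨n, h1, h2⟩ := ih
    by_cases h : i + 1 < Sfun f w' (n + 1)
    · exact ⟨n, by omega, h⟩
    · exact ⟨n + 1, by omega, by have := Sfun_lt_succ (w' := w') hα hstep (n+1); omega⟩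

lemma wpos (hwf : IsImage f w' w) (n i : ℕ) (h1 : Sfun f w' n ≤ i)
    (h2 : i < Sfun f w' (n + 1)) :
    (f (w' n))[i - Sfun f w' n]? = some (w i) := by
  have hj : i - Sfun f w' n < (f (w' n)).length := by rw [Sfun_succ] at h2; omega
  refine List.getElem?_eq_some_iff.mpr ⟨hj, ?_⟩
  have := blk hwf n (i - Sfun f w' n) hj
  rw [show Sfun f w' n + (i - Sfun f w' n) = i by omega] at this
  exact this.symm

lemma w_alpha (hα : f α = [α]) (hstep : ∀ β, β ≠ α → ∃ γ, f β = f γ ++ [β])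
    (hwf : IsImage f w' w) (n : ℕ) : w (Sfun f w' n) = α := by
  have h0 := blsp_head f α hα hstep (w' n)
  rw [List.getElem?_eq_some_iff] at h0
  obtain ⟨hp, h0⟩ := h0
  have := blk hwf n 0 hp
  rw [Nat.add_zero] at this
  rw [this, h0]

lemma alpha_iff (hα : f α = [α]) (hstep : ∀ β, β ≠ α → ∃ γ, f β = f γ ++ [β])
    (hwf : IsImage f w' w) (i : ℕ) : w i = α ↔ ∃ n, Sfun f w' n = i := by
  constructor
  · intro h
    obtain ⟨n, h1, h2⟩ := findBlock (w' := w') hα hstep i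
    refine ⟨n, ?_⟩
    by_contra hne
    have hj : i - Sfun f w' n < (f (w' n)).length := by rw [Sfun_succ] at h2; omega
    have hb := blk hwf n (i - Sfun f w' n) hj
    rw [show Sfun f w' n + (i - Sfun f w' n) = i by omega] at hb
    exact blsp_interior f α hα hstep (w' n) _ (by omega) hj (hb ▸ h)
  · rintro ⟨n, rfl⟩
    exact w_alpha hα hstep hwf n

lemma lastblk (hα : f α = [α]) (hstep : ∀ β, β ≠ α → ∃ γ, f β = f γ ++ [β])
    (hwf : IsImage f w' w) (n : ℕ) : w (Sfun f w' (n + 1) - 1) = w' n := by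
  have hl := blsp_last f α hα hstep (w' n)
  rw [List.getElem?_eq_some_iff] at hl
  obtain ⟨hp, hl⟩ := hl
  have hb := blk hwf n ((f (w' n)).length - 1) hp
  have hpos := blsp_length_pos f α hα hstep (w' n)
  rw [show Sfun f w' n + ((f (w' n)).length - 1) = Sfun f w' (n+1) - 1 by
    rw [Sfun_succ]; omega] at hb
  rw [hb, hl]

/-- Reading within a block, position `L` with `S m ≤ L ≤ S (m+1)`, including the
possible end-of-block position where the next letter is `α`. -/
lemma block_read (hα : f α = [α]) (hstep : ∀ β, β ≠ α → ∃ γ, f β = f γ ++ [β])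
    (hwf : IsImage f w' w) (m L : ℕ) (hm1 : Sfun f w' m ≤ L) (hm2 : L ≤ Sfun f w' (m + 1)) :
    (∀ j, j < L - Sfun f w' m → (f (w' m))[j]? = some (w (Sfun f w' m + j))) ∧
      (f (w' m) ++ [α])[L - Sfun f w' m]? = some (w L) := by
  have hlen : Sfun f w' (m+1) = Sfun f w' m + (f (w' m)).length := Sfun_succ f w' m
  constructor
  · intro j hj
    have := wpos hwf m (Sfun f w' m + j) (by omega) (by omega)
    rwa [show Sfun f w' m + j - Sfun f w' m = j by omega] at this
  · rcases eq_or_lt_of_le hm2 with h | h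
    · rw [show L - Sfun f w' m = (f (w' m)).length by omega]
      rw [List.getElem?_append_right le_rfl]
      simp only [Nat.sub_self]
      rw [h, w_alpha hα hstep hwf (m+1)]
      rfl
    · rw [List.getElem?_append_left (by omega)]
      exact wpos hwf m L hm1 h

/-- If `w'` repeats its prefix of length `m` at position `p`, block positions shift. -/
lemma shift_blocks (hsh : ∀ t, t < m → w' (p + t) = w' t) :
    ∀ t, t ≤ m → Sfun f w' (p + t) = Sfun f w' p + Sfun f w' t := by
  intro t ht
  induction t with
  | zero => simp [Sfun_zero]
  | succ t ih =>
    rw [show p + (t+1) = (p+t) + 1 by omega, Sfun_succ, Sfun_succ,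
      ih (by omega), hsh t (by omega)]
    omega

lemma shift_content (hα : f α = [α]) (hstep : ∀ β, β ≠ α → ∃ γ, f β = f γ ++ [β])
    (hwf : IsImage f w' w) (p m : ℕ) (hsh : ∀ t, t < m → w' (p + t) = w' t) :
    ∀ i, i < Sfun f w' m → w (Sfun f w' p + i) = w i := by
  intro i hi
  obtain ⟨t, h1, h2⟩ := findBlock (w' := w') hα hstep i
  have htm : t < m := by
    by_contra hc
    have := (Sfun_mono (w' := w') hα hstep).monotone (show m ≤ t by omega)
    omega
  have hb1 := shift_blocks (f := f) hsh t (by omega)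
  have hb2 := shift_blocks (f := f) hsh (t+1) (by omega)
  have hv1 := wpos hwf (p + t) (Sfun f w' p + i) (by omega) (by rw [show p+t+1 = p+(t+1) by omega]; omega)
  have hv2 := wpos hwf t i h1 h2
  rw [hsh t htm] at hv1
  rw [show Sfun f w' p + i - Sfun f w' (p+t) = i - Sfun f w' t by omega] at hv1
  rw [hv2] at hv1
  exact (Option.some_inj.mp hv1).symm

lemma prefix_getElem? {l l' : List A} (h : l <+: l') (i : ℕ) (hi : i < l.length) :
    l'[i]? = some l[i] := by
  obtain ⟨t, rfl⟩ := h
  rw [List.getElem?_append_left hi]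
  exact List.getElem?_eq_getElem hi

lemma prefix_of_getElem? (l l' : List A) (h : ∀ i (hi : i < l.length), l'[i]? = some l[i]) :
    l <+: l' := by
  rcases Nat.eq_zero_or_pos l.length with h0 | h0
  · rw [List.length_eq_zero_iff] at h0
    subst h0; exact List.nil_prefix
  · have hlen : l.length ≤ l'.length := by
      have := h (l.length - 1) (by omega)
      rw [List.getElem?_eq_some_iff] at this
      obtain ⟨h1, -⟩ := this
      omega
    have : l = l'.take l.length := by
      apply List.ext_getElem?
      intro i
      rw [List.getElem?_take]
      by_cases hi : i < l.length
      · rw [if_pos hi, h i hi, List.getElem?_eq_getElem hi]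
      · rw [if_neg hi, List.getElem?_eq_none (by omega)]
    rw [this]
    exact List.take_prefix _ _

/-- Core occurrence analysis: an occurrence of a repeated prefix of `w` of length `L`
preceded by some letter, where `S m < L ≤ S (m+1)`, desubstitutes. -/
lemma occ_analysis (hα : f α = [α]) (hstep : ∀ β, β ≠ α → ∃ γ, f β = f γ ++ [β])
    (hwf : IsImage f w' w) (m L k : ℕ) (b : A)
    (hm1 : Sfun f w' m < L) (hm2 : L ≤ Sfun f w' (m + 1))
    (hshift : ∀ i, i < L → w (k + 1 + i) = w i) (hb : w (k + 1 + L) = b) :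
    ∃ n, 1 ≤ n ∧ w k = w' (n - 1) ∧ (∀ t, t < m → w' (n + t) = w' t) ∧
      (∀ j, j < L - Sfun f w' m → (f (w' (n + m)))[j]? = some (w (Sfun f w' m + j))) ∧
      (f (w' (n + m)) ++ [α])[L - Sfun f w' m]? = some b := by
  have hSm := Sfun_mono (w' := w') hα hstep
  have hS0 : Sfun f w' 0 = 0 := Sfun_zero f w'
  -- the occurrence starts at a block boundary
  have hw0 : w (k + 1) = α := by
    have h0 := hshift 0 (by omega)
    rw [Nat.add_zero] at h0
    rw [h0, ← hS0]
    exact w_alpha hα hstep hwf 0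
  obtain ⟨n, hn⟩ := (alpha_iff hα hstep hwf (k + 1)).mp hw0
  have hn1 : 1 ≤ n := by
    rcases Nat.eq_zero_or_pos n with h | h
    · rw [h, hS0] at hn; omega
    · exact h
  -- blocks align along the occurrence
  have hchain : ∀ t, t ≤ m → Sfun f w' (n + t) = k + 1 + Sfun f w' t := by
    intro t ht
    induction t with
    | zero => rw [Nat.add_zero, hS0, Nat.add_zero]; exact hn
    | succ t ih =>
      have ihh := ih (by omega)
      have hst1m : Sfun f w' (t + 1) ≤ Sfun f w' m := hSm.monotone (by omega)
      have hα2 : w (k + 1 + Sfun f w' (t + 1)) = α := by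
        rw [hshift _ (by omega)]
        exact w_alpha hα hstep hwf (t + 1)
      obtain ⟨r, hr⟩ := (alpha_iff hα hstep hwf _).mp hα2
      have hrgt : n + t < r := by
        rw [← hSm.lt_iff_lt, hr, ihh]
        have := hSm (show t < t + 1 by omega)
        omega
      have hub : Sfun f w' (n + t + 1) ≤ k + 1 + Sfun f w' (t + 1) := by
        rw [← hr]; exact hSm.monotone (by omega)
      rcases eq_or_lt_of_le hub with h | h
      · rw [show n + (t + 1) = n + t + 1 by omega]; exact h
      · exfalso
        have hgt : k + 1 + Sfun f w' t < Sfun f w' (n + t + 1) := by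
          rw [← ihh]; exact hSm (by omega)
        set i := Sfun f w' (n + t + 1) - (k + 1) with hi
        have hieq : k + 1 + i = Sfun f w' (n + t + 1) := by omega
        have hiL : i < L := by omega
        have hwi : w i = α := by
          rw [← hshift i hiL, hieq]
          exact w_alpha hα hstep hwf (n + t + 1)
        obtain ⟨r', hr'⟩ := (alpha_iff hα hstep hwf i).mp hwi
        have h1 : t < r' := by rw [← hSm.lt_iff_lt, hr']; omega
        have h2 : r' < t + 1 := by rw [← hSm.lt_iff_lt, hr']; omega
        omega
  have hchm := hchain m le_rfl
  -- letters of w' align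
  have hlet : ∀ t, t < m → w' (n + t) = w' t := by
    intro t ht
    apply blsp_inj f α hα hstep
    have hc1 := hchain t (by omega)
    have hc2 := hchain (t + 1) (by omega)
    rw [show n + (t + 1) = n + t + 1 by omega] at hc2
    have hlen : (f (w' (n + t))).length = (f (w' t)).length := by
      have e1 := Sfun_succ f w' (n + t)
      have e2 := Sfun_succ f w' t
      omega
    apply List.ext_getElem?
    intro j
    by_cases hj : j < (f (w' t)).length
    · have e2 := Sfun_succ f w' t
      have hv1 := wpos hwf (n + t) (Sfun f w' (n + t) + j)
        (by omega) (by rw [Sfun_succ]; omega)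
      rw [show Sfun f w' (n + t) + j - Sfun f w' (n + t) = j by omega] at hv1
      have hv2 := wpos hwf t (Sfun f w' t + j) (by omega) (by omega)
      rw [show Sfun f w' t + j - Sfun f w' t = j by omega] at hv2
      have hsh2 : w (Sfun f w' (n + t) + j) = w (Sfun f w' t + j) := by
        rw [hc1, show k + 1 + Sfun f w' t + j = k + 1 + (Sfun f w' t + j) by omega]
        apply hshift
        have := hSm.monotone (show t + 1 ≤ m by omega)
        omega
      rw [hv1, hv2, hsh2]
    · rw [List.getElem?_eq_none (by omega), List.getElem?_eq_none (by omega)]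
  -- no early block end ("spill bound")
  have e3 := Sfun_succ f w' (n + m)
  have hspill : L - Sfun f w' m ≤ (f (w' (n + m))).length := by
    by_contra hc
    push_neg at hc
    set i := Sfun f w' m + (f (w' (n + m))).length with hi
    have hieq : k + 1 + i = Sfun f w' (n + m + 1) := by omega
    have hiL : i < L := by omega
    have hwi : w i = α := by
      rw [← hshift i hiL, hieq]
      exact w_alpha hα hstep hwf (n + m + 1)
    obtain ⟨r', hr'⟩ := (alpha_iff hα hstep hwf i).mp hwi
    have hpos := blsp_length_pos f α hα hstep (w' (n + m))
    have h1 : m < r' := by rw [← hSm.lt_iff_lt, hr']; omega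
    have h2 : r' < m + 1 := by rw [← hSm.lt_iff_lt, hr']; omega
    omega
  refine ⟨n, hn1, ?_, hlet, ?_, ?_⟩
  · have hl := lastblk hα hstep hwf (n - 1)
    rw [show n - 1 + 1 = n by omega, hn] at hl
    rw [show k + 1 - 1 = k by omega] at hl
    exact hl
  · intro j hj
    have hv := wpos hwf (n + m) (Sfun f w' (n + m) + j) (by omega) (by omega)
    rw [show Sfun f w' (n + m) + j - Sfun f w' (n + m) = j by omega] at hv
    rw [hv]
    congr 1
    rw [hchm, show k + 1 + Sfun f w' m + j = k + 1 + (Sfun f w' m + j) by omega]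
    exact hshift _ (by omega)
  · have hbr := (block_read hα hstep hwf (n + m) (k + 1 + L) (by omega) (by omega)).2
    rw [show k + 1 + L - Sfun f w' (n + m) = L - Sfun f w' m by omega, hb] at hbr
    exact hbr

end Word

section Helpers

lemma infix_pair (l : List A) (i : ℕ) (x y : A) (hx : l[i]? = some x)
    (hy : l[i + 1]? = some y) : [x, y] <:+: l := by
  rw [List.getElem?_eq_some_iff] at hx hy
  obtain ⟨hi, hx⟩ := hx
  obtain ⟨hi1, hy⟩ := hy
  refine ⟨l.take i, l.drop (i + 1 + 1), ?_⟩
  rw [← hx, ← hy]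
  calc l.take i ++ [l[i], l[i + 1]] ++ l.drop (i + 1 + 1)
      = l.take i ++ (l[i] :: (l[i + 1] :: l.drop (i + 1 + 1))) := by simp
    _ = l.take i ++ (l[i] :: l.drop (i + 1)) := by rw [List.getElem_cons_drop hi1]
    _ = l.take i ++ l.drop i := by rw [List.getElem_cons_drop hi]
    _ = l := List.take_append_drop i l

lemma infix_pair_pos (l : List A) (x y : A) (h : [x, y] <:+: l) :
    ∃ i, l[i]? = some x ∧ l[i + 1]? = some y := by
  obtain ⟨s, t, rfl⟩ := h
  refine ⟨s.length, ?_, ?_⟩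
  · rw [List.append_assoc, List.getElem?_append_right le_rfl]
    simp
  · rw [List.append_assoc, List.getElem?_append_right (by omega)]
    rw [show s.length + 1 - s.length = 1 by omega]
    simp

lemma snoc_inj (x : List A) (a b : A) (h : x ++ [a] = x ++ [b]) : a = b := by
  simpa using h

lemma prefix_same (l1 l2 L : List A) (h1 : l1 <+: L) (h2 : l2 <+: L)
    (hl : l1.length = l2.length) : l1 = l2 :=
  (List.prefix_of_prefix_length_le h1 h2 hl.le).eq_of_length hl

lemma pref_snoc {v : ℕ → A} {u : List A} {a : A} (h : PrefI (u ++ [a]) v) :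
    (∀ i (hi : i < u.length), u[i] = v i) ∧ a = v u.length := by
  constructor
  · intro i hi
    have := h i (by simp; omega)
    rwa [List.getElem_append_left hi] at this
  · have := h u.length (by simp)
    rw [List.getElem_append_right le_rfl] at this
    simpa using this

lemma mk_pref (v : ℕ → A) (N : ℕ) (a : A) (ha : a = v N) :
    PrefI ((List.range N).map v ++ [a]) v := by
  intro i hi
  simp only [List.length_append, List.length_map, List.length_range,
    List.length_singleton] at hi
  by_cases h : i < N
  · rw [List.getElem_append_left (by simpa using h)]
    simp
  · have hiN : i = N := by omega
    subst hiN
    rw [List.getElem_append_right (by simp)]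
    simp [ha]

lemma fact_cons_snoc {v : ℕ → A} {u : List A} {β b : A}
    (h : FactorI v (β :: (u ++ [b]))) :
    ∃ k, v k = β ∧ (∀ i (hi : i < u.length), u[i] = v (k + 1 + i)) ∧
      b = v (k + 1 + u.length) := by
  obtain ⟨k, hk⟩ := h
  refine ⟨k, ?_, ?_, ?_⟩
  · have := hk 0 (by simp)
    simpa using this.symm
  · intro i hi
    have := hk (i + 1) (by simp; omega)
    rw [List.getElem_cons_succ, List.getElem_append_left hi] at this
    rwa [show k + (i + 1) = k + 1 + i by omega] at this
  · have := hk (u.length + 1) (by simp)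
    rw [List.getElem_cons_succ, List.getElem_append_right le_rfl] at this
    rw [show k + (u.length + 1) = k + 1 + u.length by omega] at this
    simpa using this

lemma mk_fact (v : ℕ → A) (K N : ℕ) (β b : A) (hβ : v K = β)
    (hsh : ∀ i, i < N → v (K + 1 + i) = v i) (hb : v (K + 1 + N) = b) :
    FactorI v (β :: ((List.range N).map v ++ [b])) := by
  refine ⟨K, ?_⟩
  intro i hi
  have hi2 : i < N + 2 := by simp at hi; omega
  rcases Nat.eq_zero_or_pos i with h0 | h0
  · subst h0
    simpa using hβ.symm
  · obtain ⟨i', rfl⟩ : ∃ i', i = i' + 1 := ⟨i - 1, by omega⟩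
    rw [List.getElem_cons_succ]
    by_cases h : i' < N
    · rw [List.getElem_append_left (by simpa using h)]
      simp only [List.getElem_map, List.getElem_range]
      rw [show K + (i' + 1) = K + 1 + i' by omega]
      exact (hsh i' h).symm
    · have hiN : i' = N := by omega
      subst hiN
      rw [List.getElem_append_right (by simp)]
      rw [show K + (i' + 1) = K + 1 + i' by omega]
      simpa using hb.symm

end Helpers

section Word2

variable {f : A → List A} {α : A} {w' w : ℕ → A}

lemma backward_factor (hα : f α = [α]) (hstep : ∀ β, β ≠ α → ∃ γ, f β = f γ ++ [β])
    (hwf : IsImage f w' w) (k' m : ℕ) (x : List A) (b β : A)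
    (hβ : w' k' = β)
    (hsh' : ∀ t, t < m → w' (k' + 1 + t) = w' t)
    (hb' : x ++ [b] <+: f (w' (k' + 1 + m)) ++ [α])
    (hxw : ∀ j (hj : j < x.length), x[j] = w (Sfun f w' m + j)) :
    FactorI w (β :: ((List.range (Sfun f w' m + x.length)).map w ++ [b])) := by
  have hSm := Sfun_mono (w' := w') hα hstep
  have hS0 := Sfun_zero f w'
  have hlenb : x.length ≤ (f (w' (k' + 1 + m))).length := by
    have := hb'.length_le
    simp only [List.length_append, List.length_singleton] at this
    omega
  have hsb := shift_blocks (f := f) (p := k' + 1) hsh' m le_rfl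
  have e1 := Sfun_succ f w' (k' + 1 + m)
  have hpos1 : 1 ≤ Sfun f w' (k' + 1) := by
    have h1 := Sfun_lt_succ (w' := w') hα hstep k'
    omega
  set K := Sfun f w' (k' + 1) - 1 with hK
  have hK1 : K + 1 = Sfun f w' (k' + 1) := by omega
  apply mk_fact w K (Sfun f w' m + x.length) β b
  · have hl := lastblk hα hstep hwf k'
    rw [← hK] at hl
    rw [hl, hβ]
  · intro i hi
    rw [show K + 1 + i = Sfun f w' (k' + 1) + i by omega]
    by_cases h : i < Sfun f w' m
    · exact shift_content hα hstep hwf (k' + 1) m hsh' i h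
    · set j := i - Sfun f w' m with hj
      have hjx : j < x.length := by omega
      have hv1 := wpos hwf (k' + 1 + m) (Sfun f w' (k' + 1) + i) (by omega) (by omega)
      rw [show Sfun f w' (k' + 1) + i - Sfun f w' (k' + 1 + m) = j by omega] at hv1
      have hv2 := prefix_getElem? hb' j (by simp; omega)
      rw [List.getElem_append_left hjx] at hv2
      rw [List.getElem?_append_left (by omega)] at hv2
      rw [hv1] at hv2
      have h3 := Option.some_inj.mp hv2
      rw [h3, hxw j hjx]
      congr 1
      omega
  · rw [show K + 1 + (Sfun f w' m + x.length) = Sfun f w' (k' + 1 + m) + x.length by omega]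
    have hbr := (block_read hα hstep hwf (k' + 1 + m)
      (Sfun f w' (k' + 1 + m) + x.length) (by omega) (by omega)).2
    rw [show Sfun f w' (k' + 1 + m) + x.length - Sfun f w' (k' + 1 + m) = x.length
      by omega] at hbr
    have hv2 := prefix_getElem? hb' x.length (by simp)
    rw [List.getElem_append_right le_rfl] at hv2
    rw [hbr] at hv2
    have h3 := Option.some_inj.mp hv2
    simpa using h3

end Word2

end BLSPAux

open BLSPAux in
theorem transition_of_lsp_words {A : Type*} [Fintype A] (w w' w'' : ℕ → A)
    (hw : LSPInf w) (hw' : LSPInf w') (hw'' : LSPInf w'')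
    (f g : A → List A) (hf : IsBLSP f) (hg : IsBLSP g)
    (hwf : IsImage f w' w) (hw'g : IsImage g w'' w') :
    Transition ⟨Set.range w, f, FragSet w⟩ f ⟨Set.range w', g, FragSet w'⟩ := by
  classical
  obtain ⟨α, hα, hstep⟩ := hf
  have hSm := Sfun_mono (f := f) (w' := w') hα hstep
  have hS0 := Sfun_zero f w'
  refine ⟨⟨α, hα, hstep⟩, rfl, ?_, ?_, ?_⟩
  · -- alphabet condition
    ext x
    simp only [Set.mem_range, Set.mem_setOf_eq]
    constructor
    · rintro ⟨i, rfl⟩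
      obtain ⟨n, h1, h2⟩ := findBlock (w' := w') hα hstep i
      have hv := wpos hwf n i h1 h2
      rw [List.getElem?_eq_some_iff] at hv
      obtain ⟨hj, hv⟩ := hv
      exact ⟨w' n, ⟨n, rfl⟩, hv ▸ List.getElem_mem hj⟩
    · rintro ⟨β, ⟨n, rfl⟩, hx⟩
      rw [List.mem_iff_getElem] at hx
      obtain ⟨j, hj, rfl⟩ := hx
      exact ⟨Sfun f w' n + j, blk hwf n j hj⟩
  · -- non-breaking condition
    intro a b c β γ hmem hbrk
    obtain ⟨h1, h2, h3, h4, u, hu⟩ := hmem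
    exact hbrk w' hw' ⟨β, γ, h4, u, hu⟩ w hwf hw
  · -- fragility condition
    intro a b c β γ
    constructor
    · -- forward
      intro hmem
      obtain ⟨hab, hbc, hac, hβγ, u, hpre, hfb, hfc⟩ := hmem
      dsimp only at hpre hfb hfc
      obtain ⟨hup, haw⟩ := pref_snoc hpre
      obtain ⟨k, hkβ, hkbu, hkb⟩ := fact_cons_snoc hfb
      obtain ⟨l, hlγ, hlcu, hlc⟩ := fact_cons_snoc hfc
      have hshb : ∀ i, i < u.length → w (k + 1 + i) = w i := fun i hi => by
        rw [← hkbu i hi, hup i hi]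
      have hshc : ∀ i, i < u.length → w (l + 1 + i) = w i := fun i hi => by
        rw [← hlcu i hi, hup i hi]
      have hw0 : w 0 = α := by
        have := w_alpha hα hstep hwf 0
        rwa [hS0] at this
      refine ⟨⟨u.length, haw.symm⟩, ⟨k + 1 + u.length, hkb.symm⟩,
        ⟨l + 1 + u.length, hlc.symm⟩, ⟨k, hkβ⟩, ⟨l, hlγ⟩, hab, hbc, hac, hβγ, ?_⟩
      by_cases hu0 : u.length = 0
      · -- case (i)
        left
        have haα : a = α := by rw [haw, hu0, hw0]
        refine ⟨by rw [haα, hα], ?_, ?_⟩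
        · have hbw : b = w (k + 1) := by rw [hu0] at hkb; exact hkb
          have hbα : b ≠ α := fun hc => hab (haα.trans hc.symm)
          obtain ⟨n, h1, h2⟩ := findBlock (w' := w') hα hstep (k + 1)
          have hj0 : Sfun f w' n ≠ k + 1 := by
            intro hc
            exact hbα (by rw [hbw, ← hc, w_alpha hα hstep hwf n])
          have hkn : Sfun f w' n ≤ k := by omega
          have hv1 := wpos hwf n k hkn (by omega)
          have hv2 := wpos hwf n (k + 1) h1 h2
          rw [hkβ] at hv1
          rw [← hbw] at hv2
          refine ⟨w' n, ⟨n, rfl⟩, ?_⟩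
          apply infix_pair _ (k - Sfun f w' n) β b hv1
          rw [show k - Sfun f w' n + 1 = k + 1 - Sfun f w' n by omega]
          exact hv2
        · have hcw : c = w (l + 1) := by rw [hu0] at hlc; exact hlc
          have hcα : c ≠ α := fun hc => hac (haα.trans hc.symm)
          obtain ⟨n, h1, h2⟩ := findBlock (w' := w') hα hstep (l + 1)
          have hj0 : Sfun f w' n ≠ l + 1 := by
            intro hc
            exact hcα (by rw [hcw, ← hc, w_alpha hα hstep hwf n])
          have hkn : Sfun f w' n ≤ l := by omega
          have hv1 := wpos hwf n l hkn (by omega)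
          have hv2 := wpos hwf n (l + 1) h1 h2
          rw [hlγ] at hv1
          rw [← hcw] at hv2
          refine ⟨w' n, ⟨n, rfl⟩, ?_⟩
          apply infix_pair _ (l - Sfun f w' n) γ c hv1
          rw [show l - Sfun f w' n + 1 = l + 1 - Sfun f w' n by omega]
          exact hv2
      · -- case (ii)
        right
        set L := u.length with hL
        have hL1 : 1 ≤ L := by omega
        obtain ⟨m, hm1, hm2⟩ := findBlock (w' := w') hα hstep (L - 1)
        have hm1' : Sfun f w' m < L := by omega
        have hm2' : L ≤ Sfun f w' (m + 1) := by omega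
        have hkb' : w (k + 1 + L) = b := hkb.symm
        have hlc' : w (l + 1 + L) = c := hlc.symm
        obtain ⟨nb, hnb1, hnbβ, hletb, hjb, hlastb⟩ :=
          occ_analysis hα hstep hwf m L k b hm1' hm2' hshb hkb'
        obtain ⟨nc, hnc1, hncγ, hletc, hjc, hlastc⟩ :=
          occ_analysis hα hstep hwf m L l c hm1' hm2' hshc hlc'
        set x : List A := (List.range (L - Sfun f w' m)).map
          (fun j => w (Sfun f w' m + j)) with hx
        have hxlen : x.length = L - Sfun f w' m := by simp [hx]
        have hbr := block_read hα hstep hwf m L (by omega) hm2'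
        have key : ∀ (e d : A),
            (∀ j, j < L - Sfun f w' m → (f e)[j]? = some (w (Sfun f w' m + j))) →
            (f e ++ [α])[L - Sfun f w' m]? = some d → x ++ [d] <+: f e ++ [α] := by
          intro e d hj' hlast
          apply prefix_of_getElem?
          intro i hi
          simp only [List.length_append, List.length_singleton, hxlen] at hi
          by_cases h : i < L - Sfun f w' m
          · rw [List.getElem_append_left (show i < x.length by omega)]
            have hsome := hj' i h
            obtain ⟨hbound, -⟩ := List.getElem?_eq_some_iff.mp hsome
            rw [List.getElem?_append_left hbound, hsome]
            simp [hx]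
          · have hieq : i = L - Sfun f w' m := by omega
            subst hieq
            rw [List.getElem_append_right (show x.length ≤ L - Sfun f w' m by omega)]
            rw [hlast]
            simp [hxlen]
        have hbr2 := hbr.2
        rw [← haw] at hbr2
        have hxa : x ++ [a] <+: f (w' m) ++ [α] := key (w' m) a hbr.1 hbr2
        have hxb : x ++ [b] <+: f (w' (nb + m)) ++ [α] := key (w' (nb + m)) b hjb hlastb
        have hxc : x ++ [c] <+: f (w' (nc + m)) ++ [α] := key (w' (nc + m)) c hjc hlastc
        have hne1 : w' m ≠ w' (nb + m) := by
          intro hc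
          have hxb' := hxb
          rw [← hc] at hxb'
          exact hab (snoc_inj x a b (prefix_same _ _ _ hxa hxb' (by simp)))
        have hne2 : w' (nb + m) ≠ w' (nc + m) := by
          intro hc
          have hxc' := hxc
          rw [← hc] at hxc'
          exact hbc (snoc_inj x b c (prefix_same _ _ _ hxb hxc' (by simp)))
        have hne3 : w' m ≠ w' (nc + m) := by
          intro hc
          have hxc' := hxc
          rw [← hc] at hxc'
          exact hac (snoc_inj x a c (prefix_same _ _ _ hxa hxc' (by simp)))
        refine ⟨w' m, w' (nb + m), w' (nc + m),
          ⟨hne1, hne2, hne3, hβγ, (List.range m).map w', ?_, ?_, ?_⟩,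
          x, α, hα, hxa, hxb, hxc⟩
        · have : ((List.range m).map w').length = m := by simp
          exact this ▸ mk_pref w' m (w' m) rfl
        · have hβ' : w' (nb - 1) = β := by rw [← hnbβ, hkβ]
          apply mk_fact w' (nb - 1) m β (w' (nb + m)) hβ'
          · intro t ht
            rw [show nb - 1 + 1 + t = nb + t by omega]
            exact hletb t ht
          · rw [show nb - 1 + 1 + m = nb + m by omega]
        · have hγ' : w' (nc - 1) = γ := by rw [← hncγ, hlγ]
          apply mk_fact w' (nc - 1) m γ (w' (nc + m)) hγ'
          · intro t ht
            rw [show nc - 1 + 1 + t = nc + t by omega]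
            exact hletc t ht
          · rw [show nc - 1 + 1 + m = nc + m by omega]
    · -- backward
      rintro ⟨-, -, -, -, -, hab, hbc, hac, hβγ, hcase⟩
      refine ⟨hab, hbc, hac, hβγ, ?_⟩
      have hw0 : w 0 = α := by
        have := w_alpha hα hstep hwf 0
        rwa [hS0] at this
      rcases hcase with ⟨hfa, ⟨δ, ⟨n, rfl⟩, hinf⟩, ⟨δ2, ⟨n2, rfl⟩, hinf2⟩⟩ |
        ⟨a', b', c', hmem', x, α', hα', hxa, hxb, hxc⟩
      · -- case (i)
        have haα : a = α := blsp_uniq f α hα hstep a hfa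
        obtain ⟨i, hx1, hy1⟩ := infix_pair_pos _ _ _ hinf
        obtain ⟨i2, hx2, hy2⟩ := infix_pair_pos _ _ _ hinf2
        rw [List.getElem?_eq_some_iff] at hx1 hy1 hx2 hy2
        obtain ⟨hi1, hx1⟩ := hx1
        obtain ⟨hi1', hy1⟩ := hy1
        obtain ⟨hi2, hx2⟩ := hx2
        obtain ⟨hi2', hy2⟩ := hy2
        have hwβ : w (Sfun f w' n + i) = β := by rw [blk hwf n i hi1, hx1]
        have hwb : w (Sfun f w' n + (i + 1)) = b := by rw [blk hwf n (i + 1) hi1', hy1]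
        have hwγ : w (Sfun f w' n2 + i2) = γ := by rw [blk hwf n2 i2 hi2, hx2]
        have hwc : w (Sfun f w' n2 + (i2 + 1)) = c := by rw [blk hwf n2 (i2 + 1) hi2', hy2]
        refine ⟨[], ?_, ⟨Sfun f w' n + i, ?_⟩, ⟨Sfun f w' n2 + i2, ?_⟩⟩
        · intro t ht
          simp only [List.nil_append, List.length_singleton] at ht
          obtain rfl : t = 0 := by omega
          simpa [haα] using hw0.symm
        · intro t ht
          simp only [List.nil_append, List.length_cons, List.length_singleton] at ht
          match t with
          | 0 => simpa using hwβ.symm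
          | 1 => rw [← Nat.add_assoc] at hwb; simpa using hwb.symm
        · intro t ht
          simp only [List.nil_append, List.length_cons, List.length_singleton] at ht
          match t with
          | 0 => simpa using hwγ.symm
          | 1 => rw [← Nat.add_assoc] at hwc; simpa using hwc.symm
      · -- case (ii)
        have hα'α : α' = α := blsp_uniq f α hα hstep α' hα'
        rw [hα'α] at hxa hxb hxc
        obtain ⟨-, -, -, -, u'', hpre'', hfb'', hfc''⟩ := hmem'
        dsimp only at hpre'' hfb'' hfc''
        obtain ⟨hu''t, ha'⟩ := pref_snoc hpre''
        obtain ⟨k', hk'β, hshb0, hb'eq⟩ := fact_cons_snoc hfb''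
        obtain ⟨l', hl'γ, hshc0, hc'eq⟩ := fact_cons_snoc hfc''
        set m := u''.length with hm
        have hshb : ∀ t, t < m → w' (k' + 1 + t) = w' t := fun t ht => by
          rw [← hshb0 t ht, hu''t t ht]
        have hshc : ∀ t, t < m → w' (l' + 1 + t) = w' t := fun t ht => by
          rw [← hshc0 t ht, hu''t t ht]
        rw [ha'] at hxa
        rw [hb'eq] at hxb
        rw [hc'eq] at hxc
        have hlena : x.length ≤ (f (w' m)).length := by
          have := hxa.length_le
          simp only [List.length_append, List.length_singleton] at this
          omega
        have hbra := block_read hα hstep hwf m (Sfun f w' m + x.length) (by omega)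
          (by rw [Sfun_succ]; omega)
        have hxw : ∀ j (hj : j < x.length), x[j] = w (Sfun f w' m + j) := by
          intro j hj
          have h1 := hbra.1 j (by omega)
          have h2 := prefix_getElem? hxa j (by simp; omega)
          rw [List.getElem_append_left hj] at h2
          rw [List.getElem?_append_left (by omega)] at h2
          rw [h1] at h2
          exact (Option.some_inj.mp h2).symm
        have haw : a = w (Sfun f w' m + x.length) := by
          have h2 := prefix_getElem? hxa x.length (by simp)
          rw [List.getElem_append_right le_rfl] at h2
          have h3 := hbra.2
          rw [show Sfun f w' m + x.length - Sfun f w' m = x.length by omega] at h3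
          rw [h3] at h2
          have h4 := Option.some_inj.mp h2
          simpa using h4.symm
        exact ⟨(List.range (Sfun f w' m + x.length)).map w, mk_pref w _ a haw,
          backward_factor hα hstep hwf k' m x b β hk'β hshb hxb hxw,
          backward_factor hα hstep hwf l' m x c γ hl'γ hshc hxc hxw⟩
end

section
/- For every non-empty finite LSP word w over an alphabet A, there exists a letter a occurring in w such that the word wa is LSP. -/
/-- The finite word `w` is LSP: every left special factor of `w` is a prefix of `w`. -/
def LSPFin {A : Type*} (w : List A) : Prop :=
  ∀ (u : List A) (a b : A), a ≠ b → (a :: u) <:+: w → (b :: u) <:+: w → u <+: w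

/-- Suffixes of a common list having equal length are equal. -/
lemma suffix_eq_of_length_eq {A : Type*} {s t l : List A} (hs : s <:+ l) (ht : t <:+ l)
    (h : s.length = t.length) : s = t := by
  obtain ⟨x, hx⟩ := hs
  obtain ⟨y, hy⟩ := ht
  exact (List.append_inj' (hx.trans hy.symm) h).2

/-- A shorter suffix is a suffix of a longer suffix. -/
lemma suffix_of_suffix_length_le {A : Type*} {s t l : List A} (hs : s <:+ l) (ht : t <:+ l)
    (h : s.length ≤ t.length) : s <:+ t := by
  rw [← List.reverse_prefix] at hs ht ⊢
  exact List.prefix_of_prefix_length_le hs ht (by simpa using h)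

/-- A factor of `w ++ [a]` is a factor of `w` or a suffix of `w ++ [a]`. -/
lemma infix_concat_cases {A : Type*} {v w : List A} {a : A} (h : v <:+: w ++ [a]) :
    v <:+: w ∨ v <:+ w ++ [a] := by
  obtain ⟨s, t, hst⟩ := h
  rcases t.eq_nil_or_concat with rfl | ⟨t', x, rfl⟩
  · right
    exact ⟨s, by simpa using hst⟩
  · left
    rw [List.concat_eq_append] at hst
    have h' : (s ++ v ++ t') ++ [x] = w ++ [a] := by
      simpa [List.append_assoc] using hst
    exact ⟨s, t', (List.append_inj' h' rfl).1⟩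

/-- A nonempty suffix of `w ++ [a]` ends with `a`, with the rest a suffix of `w`. -/
lemma suffix_concat_decomp {A : Type*} {v w : List A} {a : A} (h : v <:+ w ++ [a])
    (hv : v ≠ []) : ∃ v', v = v' ++ [a] ∧ v' <:+ w := by
  obtain ⟨s, hs⟩ := h
  rcases v.eq_nil_or_concat with rfl | ⟨v', x, rfl⟩
  · exact absurd rfl hv
  · rw [List.concat_eq_append] at hs ⊢
    have h' : (s ++ v') ++ [x] = w ++ [a] := by simpa [List.append_assoc] using hs
    obtain ⟨h1, h2⟩ := List.append_inj' h' rfl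
    have hx : x = a := by simpa using h2
    exact ⟨v', by rw [hx], ⟨s, h1⟩⟩

theorem lsp_right_extendable {A : Type*} (w : List A) (hne : w ≠ [])
    (hw : LSPFin w) : ∃ a : A, a ∈ w ∧ LSPFin (w ++ [a]) := by
  -- the set of lengths of proper borders of `w`
  set S : Set ℕ := {k | k < w.length ∧ w.take k <:+ w} with hS
  have hwlen : 0 < w.length := List.length_pos_iff.mpr hne
  have h0S : 0 ∈ S := ⟨hwlen, by simp⟩
  have hbdd : BddAbove S := ⟨w.length, fun k hk => le_of_lt hk.1⟩
  set m : ℕ := sSup S with hmdef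
  have hmS : m ∈ S := Nat.sSup_mem ⟨0, h0S⟩ hbdd
  have hmax : ∀ k ∈ S, k ≤ m := fun k hk => le_csSup hbdd hk
  obtain ⟨hmlt, hmsuf⟩ := hmS
  -- the letter following the longest proper border
  set a : A := w.get ⟨m, hmlt⟩ with hadef
  have hamem : a ∈ w := List.get_mem w ⟨m, hmlt⟩
  have htake : w.take m ++ [a] = w.take (m + 1) := by
    rw [hadef, List.get_eq_getElem, ← List.concat_eq_append]
    exact List.take_concat_get hmlt
  refine ⟨a, hamem, ?_⟩
  -- key step: if `x :: (u' ++ [a])` is a factor of `w` and `y :: u'` is a suffix of `w`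
  -- with `x ≠ y`, then `u' ++ [a]` is a prefix of `w ++ [a]`.
  have key : ∀ (x y : A) (u' : List A), x ≠ y → (x :: (u' ++ [a])) <:+: w →
      (y :: u') <:+ w → (u' ++ [a]) <+: w ++ [a] := by
    intro x y u' hxy hx hy
    have hxu' : (x :: u') <:+: w := by
      refine List.IsPrefix.isInfix ?_ |>.trans hx
      exact ⟨[a], by simp⟩
    have hu'suf : u' <:+ w := (List.suffix_cons y u').trans hy
    have hu'pre : u' <+: w := hw u' x y hxy hxu' hy.isInfix
    have hlen : u'.length + 1 ≤ w.length := by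
      have := hy.length_le
      simpa using this
    have hu'S : u'.length ∈ S := by
      refine ⟨by omega, ?_⟩
      rw [← List.prefix_iff_eq_take.mp hu'pre]
      exact hu'suf
    have hle : u'.length ≤ m := hmax _ hu'S
    rcases eq_or_lt_of_le hle with heq | hlt
    · -- `u'` is the longest border itself, so `u' ++ [a]` is a prefix of `w`.
      have hu'eq : u' = w.take m := by
        refine suffix_eq_of_length_eq hu'suf hmsuf ?_
        simp [heq, List.length_take, Nat.min_eq_left (le_of_lt hmlt)]
      have : u' ++ [a] <+: w := by
        rw [hu'eq, htake]; exact List.take_prefix _ _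
      exact this.trans (List.prefix_append w [a])
    · -- `y :: u'` sits inside the longest border, so `y :: (u' ++ [a])` is a factor of `w`,
      -- making `u' ++ [a]` left special in `w`, hence a prefix of `w`.
      have hyin : (y :: u') <:+ w.take m := by
        refine suffix_of_suffix_length_le hy hmsuf ?_
        simp only [List.length_cons, List.length_take]
        omega
      have hyfact : (y :: (u' ++ [a])) <:+: w := by
        have h1 : (y :: u') ++ [a] <:+ w.take m ++ [a] := by
          obtain ⟨t, ht⟩ := hyin
          exact ⟨t, by rw [← List.append_assoc, ht]⟩
        rw [htake] at h1
        have h2 : (y :: u') ++ [a] <:+: w := h1.isInfix.trans (List.take_prefix _ _).isInfix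
        simpa using h2
      have : (u' ++ [a]) <+: w := hw (u' ++ [a]) x y hxy hx hyfact
      exact this.trans (List.prefix_append w [a])
  -- now verify LSP for `w ++ [a]`
  intro u c d hcd hcu hdu
  rcases eq_or_ne u [] with rfl | hune
  · exact List.nil_prefix
  rcases infix_concat_cases hcu with hcw | hcs
  · rcases infix_concat_cases hdu with hdw | hds
    · -- both factors of `w`: `u` is left special in `w`
      exact (hw u c d hcd hcw hdw).trans (List.prefix_append w [a])
    · -- `d :: u` is a new suffix factor
      obtain ⟨v', hv', hv'suf⟩ := suffix_concat_decomp hds (by simp)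
      match v', hv', hv'suf with
      | [], hv', _ => exact absurd (List.cons_eq_cons.mp (by simpa using hv')).2.symm hune
      | e :: u', hv', hv'suf =>
        obtain ⟨he, hu⟩ : d = e ∧ u = u' ++ [a] := by
          have h2 := List.cons_eq_cons.mp (by simpa using hv')
          exact ⟨h2.1, h2.2⟩
        rw [hu]
        rw [hu] at hcw
        exact key c e u' (he ▸ hcd) hcw hv'suf
  · rcases infix_concat_cases hdu with hdw | hds
    · -- `c :: u` is a new suffix factor
      obtain ⟨v', hv', hv'suf⟩ := suffix_concat_decomp hcs (by simp)
      match v', hv', hv'suf with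
      | [], hv', _ => exact absurd (List.cons_eq_cons.mp (by simpa using hv')).2.symm hune
      | e :: u', hv', hv'suf =>
        obtain ⟨he, hu⟩ : c = e ∧ u = u' ++ [a] := by
          have h2 := List.cons_eq_cons.mp (by simpa using hv')
          exact ⟨h2.1, h2.2⟩
        rw [hu]
        rw [hu] at hdw
        exact key d e u' (he ▸ hcd.symm) hdw hv'suf
    · -- both new: equal suffixes of the same length, contradiction
      exfalso
      have heq : (c :: u) = (d :: u) := suffix_eq_of_length_eq hcs hds rfl
      exact hcd (List.cons_eq_cons.mp heq).1
end

section
/- Let A be a finite non-empty alphabet. A finite word w over A is LSP if and only if w is a prefix of some infinite LSP word over A. -/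
section Aux

open List

variable {A : Type*}

lemma suffix_drop_eq' {u w : List A} (h : u <:+ w) :
    w.drop (w.length - u.length) = u := by
  obtain ⟨p, rfl⟩ := h
  simp [List.drop_left']

lemma prefix_of_getElem {u w : List A} (hl : u.length ≤ w.length)
    (h : ∀ i (hi : i < u.length) (hw : i < w.length), u[i] = w[i]) : u <+: w := by
  rw [List.prefix_iff_eq_take]
  apply List.ext_getElem
  · simp [Nat.min_eq_left hl]
  · intro i h1 h2
    simpa using h i h1 (by omega)

lemma infix_of_shift {u w : List A} {k : ℕ} (hk : k + u.length ≤ w.length)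
    (h : ∀ i (hi : i < u.length) (hw : k + i < w.length), u[i] = w[k + i]) : u <:+: w := by
  have hs : u <+: w.drop k := by
    apply prefix_of_getElem
    · simp; omega
    · intro i hi hw
      rw [h i hi (by omega), List.getElem_drop]
  exact hs.isInfix.trans (w.drop_suffix k).isInfix

lemma shift_of_infix {u w : List A} (h : u <:+: w) :
    ∃ k, k + u.length ≤ w.length ∧
      ∀ i (hi : i < u.length) (hw : k + i < w.length), u[i] = w[k + i] := by
  obtain ⟨s, t, hst⟩ := h
  refine ⟨s.length, by rw [← hst]; simp, ?_⟩
  intro i hi hw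
  subst hst
  rw [List.getElem_append_left (show s.length + i < (s ++ u).length by simp; omega),
    List.getElem_append_right (show s.length ≤ s.length + i by omega)]
  congr 1
  omega

lemma concat_infix_cases {v w : List A} {a : A} (h : v <:+: w ++ [a]) :
    v <:+: w ∨ v <:+ w ++ [a] := by
  obtain ⟨s, t, hst⟩ := h
  rcases eq_or_ne t [] with rfl | ht
  · right
    exact ⟨s, by simpa using hst⟩
  · left
    obtain ⟨t', c, rfl⟩ : ∃ t' c, t = t' ++ [c] := by
      rcases t.eq_nil_or_concat with h' | ⟨t', c, h'⟩
      · exact absurd h' ht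
      · exact ⟨t', c, by simpa [List.concat_eq_append] using h'⟩
    have := List.append_inj' (by simpa using hst : (s ++ v ++ t') ++ [c] = w ++ [a]) rfl
    exact ⟨s, t', this.1⟩

lemma suffix_eq_of_length {u v w : List A} (hu : u <:+ w) (hv : v <:+ w)
    (h : u.length = v.length) : u = v := by
  rw [← suffix_drop_eq' hu, ← suffix_drop_eq' hv, h]

-- suffix of concat ending analysis
lemma concat_suffix_cons {x : A} {u w : List A} {a : A} (h : (x :: u) <:+ w ++ [a])
    (hu : u ≠ []) : u = u.dropLast ++ [a] ∧ (x :: u.dropLast) <:+ w := by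
  obtain ⟨p, hp⟩ := h
  have hu' : u = u.dropLast ++ [u.getLast hu] := (List.dropLast_append_getLast hu).symm
  have h2 : (p ++ x :: u.dropLast) ++ [u.getLast hu] = w ++ [a] := by
    calc (p ++ x :: u.dropLast) ++ [u.getLast hu]
        = p ++ x :: (u.dropLast ++ [u.getLast hu]) := by simp
      _ = w ++ [a] := by rw [List.dropLast_append_getLast hu, hp]
  have := List.append_inj' h2 rfl
  have hlast : u.getLast hu = a := by simpa using this.2
  exact ⟨hlast ▸ hu', ⟨p, this.1⟩⟩

def LSaux (u w : List A) : Prop :=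
  ∃ x y : A, x ≠ y ∧ (x :: u) <:+: w ∧ (y :: u) <:+: w

lemma lsp_concat_of_key {w : List A} {a : A} (hw : LSPFin w)
    (key : ∀ (u' : List A) (x y : A), x ≠ y → (x :: u') <:+ w → (y :: (u' ++ [a])) <:+: w →
      (u' ++ [a]) <+: w ++ [a]) :
    LSPFin (w ++ [a]) := by
  have main : ∀ (u : List A) (x y : A), x ≠ y → (x :: u) <:+ w ++ [a] →
      (y :: u) <:+: w ++ [a] → u <+: w ++ [a] := by
    intro u x y hxy hx hy
    rcases eq_or_ne u [] with rfl | hu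
    · exact List.nil_prefix
    obtain ⟨hux, hxd⟩ := concat_suffix_cons hx hu
    rcases concat_infix_cases hy with hyw | hys
    · rw [hux] at hyw ⊢
      exact key u.dropLast x y hxy hxd (by simpa using hyw)
    · obtain ⟨_, hyd⟩ := concat_suffix_cons hys hu
      have := suffix_eq_of_length hxd hyd rfl
      simp only [List.cons.injEq] at this
      exact absurd this.1 hxy
  intro u x y hxy hx hy
  rcases concat_infix_cases hx with hx' | hx'
  · rcases concat_infix_cases hy with hy' | hy'
    · exact (hw u x y hxy hx' hy').trans (List.prefix_append w [a])
    · exact main u y x hxy.symm hy' (hx'.trans (List.prefix_append w [a]).isInfix)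
  · exact main u x y hxy hx' hy

lemma lsp_extend [Nonempty A] {w : List A} (hw : LSPFin w) :
    ∃ a : A, LSPFin (w ++ [a]) := by
  classical
  by_cases h : ∃ u, u <:+ w ∧ LSaux u w
  case neg =>
    set c := Classical.arbitrary A with hc
    refine ⟨c, lsp_concat_of_key hw ?_⟩
    intro u' x y hxy hxs hyi
    exfalso
    apply h
    have h1 : u' <:+ x :: u' := ⟨[x], rfl⟩
    have h2 : (y :: u') <+: y :: (u' ++ [c]) := ⟨[c], by simp⟩
    exact ⟨u', h1.trans hxs, x, y, hxy, hxs.isInfix, h2.isInfix.trans hyi⟩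
  case pos =>
    set L := w.length with hL
    set Q : ℕ → Prop := fun n => n ≤ L ∧ LSaux (w.drop (L - n)) w with hQ
    set n₀ := Nat.findGreatest Q L with hn₀
    obtain ⟨u₀, hu₀s, hu₀⟩ := h
    have hQm : Q u₀.length := ⟨hu₀s.length_le, by rw [suffix_drop_eq' hu₀s]; exact hu₀⟩
    have hQn₀ : Q n₀ := Nat.findGreatest_spec hu₀s.length_le hQm
    set s := w.drop (L - n₀) with hs
    have hslen : s.length = n₀ := by rw [hs, List.length_drop]; omega
    have hsLS : LSaux s w := hQn₀.2
    have hspre : s <+: w := by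
      obtain ⟨x, y, hxy, h1, h2⟩ := hsLS
      exact hw s x y hxy h1 h2
    have hn₀lt : n₀ < L := by
      obtain ⟨x, y, _, h1, _⟩ := hsLS
      have := h1.length_le
      simp only [List.length_cons, hslen] at this
      omega
    refine ⟨w[n₀]'hn₀lt, lsp_concat_of_key hw ?_⟩
    set a := w[n₀]'hn₀lt with ha
    have hsa : s ++ [a] <+: w := by
      have hst : s = w.take n₀ := by
        rw [List.prefix_iff_eq_take] at hspre
        rw [hspre, hslen]
      have : s ++ [a] = w.take (n₀ + 1) := by
        rw [hst, List.take_succ, List.getElem?_eq_getElem hn₀lt]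
        rfl
      rw [this]
      exact List.take_prefix _ _
    intro u' x y hxy hxs hyi
    have h1 : u' <:+ x :: u' := ⟨[x], rfl⟩
    have h2 : (y :: u') <+: y :: (u' ++ [a]) := ⟨[a], by simp⟩
    have hu's : u' <:+ w := h1.trans hxs
    have hLS' : LSaux u' w := ⟨x, y, hxy, hxs.isInfix, h2.isInfix.trans hyi⟩
    have hn' : u'.length ≤ n₀ :=
      Nat.le_findGreatest hu's.length_le ⟨hu's.length_le, by rw [suffix_drop_eq' hu's]; exact hLS'⟩
    rcases eq_or_lt_of_le hn' with heq | hlt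
    · have hu'eq : u' = s :=
        suffix_eq_of_length hu's (hs ▸ w.drop_suffix (L - n₀)) (by rw [hslen, heq])
      rw [hu'eq]
      exact hsa.trans (List.prefix_append w [a])
    · set j := n₀ - u'.length - 1 with hj
      have hjlt : j < s.length := by rw [hslen]; omega
      have hxlen : u'.length + 1 ≤ L := by
        have := hxs.length_le
        simpa using this
      have hxds : x :: u' = s.drop j := by
        have h1 : x :: u' = w.drop (L - (x :: u').length) := (suffix_drop_eq' hxs).symm
        rw [h1, hs, List.drop_drop]
        congr 1
        simp only [List.length_cons]
        omega
      have hxu'a : (x :: (u' ++ [a])) <:+: w := by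
        have h1 : x :: (u' ++ [a]) = (s ++ [a]).drop j := by
          rw [List.drop_append_of_le_length (le_of_lt hjlt), ← hxds]
          simp
        rw [h1]
        exact (((s ++ [a]).drop_suffix j).isInfix).trans hsa.isInfix
      exact (hw (u' ++ [a]) x y hxy hxu'a hyi).trans (List.prefix_append w [a])

open Classical in
noncomputable def lspStep [Nonempty A] (w : List A) : List A :=
  if h : LSPFin w then w ++ [Classical.choose (lsp_extend h)] else w

lemma lspStep_lsp [Nonempty A] {w : List A} (h : LSPFin w) : LSPFin (lspStep w) := by
  rw [lspStep, dif_pos h]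
  exact Classical.choose_spec (lsp_extend h)

lemma lspStep_prefix [Nonempty A] (w : List A) : w <+: lspStep w := by
  rw [lspStep]
  split
  · exact List.prefix_append _ _
  · exact List.prefix_refl _

lemma lspStep_length [Nonempty A] {w : List A} (h : LSPFin w) :
    (lspStep w).length = w.length + 1 := by
  rw [lspStep, dif_pos h]
  simp

end Aux

theorem finite_lsp_iff_prefix_of_infinite_lsp {A : Type*} [Fintype A] [Nonempty A]
    (w : List A) : LSPFin w ↔ ∃ v : ℕ → A, LSPInf v ∧ PrefI w v := by
  classical
  constructor
  · intro hw
    set W : ℕ → List A := fun n => lspStep^[n] w with hWdef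
    have hW0 : W 0 = w := rfl
    have hWs : ∀ n, W (n + 1) = lspStep (W n) := fun n => Function.iterate_succ_apply' _ _ _
    have hWlsp : ∀ n, LSPFin (W n) := by
      intro n
      induction n with
      | zero => exact hw
      | succ n ih => rw [hWs]; exact lspStep_lsp ih
    have hWlen : ∀ n, (W n).length = w.length + n := by
      intro n
      induction n with
      | zero => rfl
      | succ n ih => rw [hWs, lspStep_length (hWlsp n), ih]; omega
    have hmono : ∀ n, W n <+: W (n + 1) := fun n => (hWs n) ▸ lspStep_prefix (W n)
    have hWpre : ∀ m n, m ≤ n → W m <+: W n := by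
      intro m n h
      induction n, h using Nat.le_induction with
      | base => exact List.prefix_refl _
      | succ n hmn ih => exact ih.trans (hmono n)
    set v : ℕ → A := fun n => (W (n + 1)).getD n (Classical.arbitrary A) with hvdef
    have hvlt : ∀ n, n < (W (n + 1)).length := by intro n; rw [hWlen]; omega
    have hv : ∀ n, v n = (W (n + 1))[n]'(hvlt n) := fun n => List.getD_eq_getElem _ _ (hvlt n)
    have hvW : ∀ n i (hi : i < (W n).length), (W n)[i] = v i := by
      intro n i hi
      rw [hv i]
      rcases le_total n (i + 1) with h | h
      · exact (hWpre n (i + 1) h).getElem hi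
      · exact ((hWpre (i + 1) n h).getElem (hvlt i)).symm
    have factor_infix : ∀ z : List A, FactorI v z → ∃ n, z <:+: W n := by
      rintro z ⟨k, hk⟩
      refine ⟨k + z.length, infix_of_shift (k := k) (by rw [hWlen]; omega) ?_⟩
      intro i hi hwl
      rw [hk i hi]
      exact (hvW _ (k + i) hwl).symm
    refine ⟨v, ?_, fun i hi => hvW 0 i hi⟩
    intro u a b hab ha hb
    obtain ⟨m, hm⟩ := factor_infix _ ha
    obtain ⟨n, hn⟩ := factor_infix _ hb
    have hm' : (a :: u) <:+: W (max m n) := hm.trans (hWpre m _ (le_max_left m n)).isInfix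
    have hn' : (b :: u) <:+: W (max m n) := hn.trans (hWpre n _ (le_max_right m n)).isInfix
    have hu : u <+: W (max m n) := hWlsp _ u a b hab hm' hn'
    intro i hi
    exact (hu.getElem hi).trans (hvW _ i (hi.trans_le hu.length_le))
  · rintro ⟨v, hv, hpre⟩
    intro u a b hab ha hb
    have hfact : ∀ z : List A, z <:+: w → FactorI v z := by
      intro z hz
      obtain ⟨k, hk1, hk2⟩ := shift_of_infix hz
      refine ⟨k, fun i hi => ?_⟩
      rw [hk2 i hi (by omega)]
      exact hpre (k + i) (by omega)
    have hpu := hv u a b hab (hfact _ ha) (hfact _ hb)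
    have hlen : u.length ≤ w.length := by
      have := ha.length_le
      simp only [List.length_cons] at this
      omega
    apply prefix_of_getElem hlen
    intro i hi hwi
    rw [hpu i hi]
    exact (hpre i hwi).symm
end

section
/- Let w be a non-empty finite LSP word, let u be the longest border of w (the longest word distinct from w that is both a prefix and a suffix of w), and write w = pu. Then p is non-empty and the periodic infinite word p^ω (the infinite word obtained by repeating p forever) is LSP. -/
namespace PeriodicLSPAux

/-- segment `v[i], v[i+1], ..., v[i+n-1]` of an infinite word. -/
def seg {A : Type*} (v : ℕ → A) (i n : ℕ) : List A := (List.range n).map fun j => v (i + j)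

lemma seg_length {A : Type*} (v : ℕ → A) (i n : ℕ) : (seg v i n).length = n := by
  simp [seg]

lemma seg_getElem {A : Type*} (v : ℕ → A) (i n j : ℕ) (h : j < (seg v i n).length) :
    (seg v i n)[j] = v (i + j) := by
  simp [seg]

lemma seg_infix {A : Type*} {w : List A} {v : ℕ → A}
    (hvw : ∀ i (h : i < w.length), w[i] = v i)
    {i n : ℕ} (hn : i + n ≤ w.length) : seg v i n <:+: w := by
  have hseg : seg v i n = (w.drop i).take n := by
    apply List.ext_getElem
    · simp [seg_length]; omega
    · intro j h1 h2
      rw [seg_getElem]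
      rw [List.getElem_take, List.getElem_drop]
      exact (hvw (i + j) (by rw [seg_length] at h1; omega)).symm
  rw [hseg]
  exact ((List.take_prefix _ _).isInfix).trans (List.drop_suffix i w).isInfix

/-- Key lemma: an occurrence pair at distinct residues `x < y < q`, with distinct
preceding letters, forces the factor to be a prefix of `v`. -/
lemma key {A : Type*} {w : List A} {v : ℕ → A} {q U : ℕ}
    (hw : LSPFin w)
    (hmaxU : ∀ u' : List A, u' <+: w → u' <:+ w → u' ≠ w → u'.length ≤ U)
    (hlen : w.length = q + U)
    (hvw : ∀ i (h : i < w.length), w[i] = v i)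
    (s : List A) (x y : ℕ) (hx : 1 ≤ x) (hxy : x < y) (hy : y < q)
    (occx : ∀ i (h : i < s.length), s[i] = v (x + i))
    (occy : ∀ i (h : i < s.length), s[i] = v (y + i))
    (hab : v (x - 1) ≠ v (y - 1)) :
    PrefI s v := by
  classical
  by_cases hgood : y + s.length ≤ q + U
  · -- both occurrences (with their preceding letters) fit inside `w`
    have hconsx : v (x - 1) :: s = seg v (x - 1) (s.length + 1) := by
      apply List.ext_getElem
      · simp [seg_length]
      · intro j h1 h2
        match j, h1 with
        | 0, h1 => simp [seg_getElem]
        | j + 1, h1 =>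
          rw [List.getElem_cons_succ, seg_getElem]
          rw [occx j (by simpa using h1)]
          congr 1
          omega
    have hconsy : v (y - 1) :: s = seg v (y - 1) (s.length + 1) := by
      apply List.ext_getElem
      · simp [seg_length]
      · intro j h1 h2
        match j, h1 with
        | 0, h1 => simp [seg_getElem]
        | j + 1, h1 =>
          rw [List.getElem_cons_succ, seg_getElem]
          rw [occy j (by simpa using h1)]
          congr 1
          omega
    have h1 : (v (x - 1) :: s) <:+: w := by
      rw [hconsx]; exact seg_infix hvw (by omega)
    have h2 : (v (y - 1) :: s) <:+: w := by
      rw [hconsy]; exact seg_infix hvw (by omega)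
    have hs : s <+: w := hw s _ _ hab h1 h2
    intro i hi
    rw [hs.getElem hi]
    exact hvw i (lt_of_lt_of_le hi hs.length_le)
  · -- one occurrence overflows `w`: contradiction with maximality of the border
    exfalso
    push_neg at hgood
    set d := y - x with hd
    have hd1 : 1 ≤ d := by omega
    -- agreement of v with its shift by d, on the occurrence window
    have hDocc : ∀ r, x ≤ r → r < x + s.length → v r = v (r + d) := by
      intro r h1 h2
      have h3 : r - x < s.length := by omega
      have e1 := occx (r - x) h3
      have e2 := occy (r - x) h3
      rw [show x + (r - x) = r by omega] at e1
      rw [show y + (r - x) = r + d by omega] at e2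
      rw [← e1, ← e2]
    have hex : ∃ j, ∀ r, j ≤ r → r < x → v r = v (r + d) :=
      ⟨x, fun r h1 h2 => absurd (h1.trans_lt h2) (lt_irrefl _)⟩
    set j₀ := Nat.find hex with hj₀def
    have hj₀ : ∀ r, j₀ ≤ r → r < x → v r = v (r + d) := Nat.find_spec hex
    have hj₀x : j₀ ≤ x :=
      Nat.find_le (fun r h1 h2 => absurd (h1.trans_lt h2) (lt_irrefl _))
    have hagree : ∀ r, j₀ ≤ r → r < q + U - d → v r = v (r + d) := by
      intro r h1 h2
      rcases lt_or_ge r x with h | h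
      · exact hj₀ r h1 h
      · exact hDocc r h (by omega)
    -- a border of `w` longer than `U` gives a contradiction
    have border : ∀ d' : ℕ, 1 ≤ d' → d' ≤ q - 1 →
        (∀ i, i < q + U - d' → v i = v (i + d')) → False := by
      intro d' hd'1 hd'2 hagr
      have hq2 : 2 ≤ q := by omega
      have hpref : w.take (q + U - d') <+: w := List.take_prefix _ _
      have htd : w.take (q + U - d') = w.drop d' := by
        apply List.ext_getElem
        · simp only [List.length_take, List.length_drop, hlen]; omega
        · intro i hi1 hi2
          rw [List.getElem_take, List.getElem_drop]
          have hiq : i < q + U - d' := by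
            simp only [List.length_take, hlen] at hi1; omega
          rw [hvw i (by omega), hvw (d' + i) (by omega)]
          rw [show d' + i = i + d' by omega]
          exact hagr i hiq
      have hsuf : w.take (q + U - d') <:+ w := htd ▸ List.drop_suffix _ _
      have hne' : w.take (q + U - d') ≠ w := by
        intro hcontra
        have := congrArg List.length hcontra
        simp only [List.length_take, hlen] at this
        omega
      have := hmaxU _ hpref hsuf hne'
      simp only [List.length_take, hlen] at this
      omega
    have hdq : d ≤ q - 1 := by omega
    rcases Nat.eq_zero_or_pos j₀ with hj0 | hj0
    · exact border d hd1 hdq (fun i hi => hagree i (by omega) hi)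
    · -- j₀ ≥ 1 : there is a "break" just before j₀
      have hbreak : v (j₀ - 1) ≠ v (j₀ - 1 + d) := by
        have hmin := Nat.find_min hex (show j₀ - 1 < j₀ by omega)
        push_neg at hmin
        obtain ⟨r, hr1, hr2, hr3⟩ := hmin
        have hreq : r = j₀ - 1 := by
          by_contra hne2
          exact hr3 (hj₀ r (by omega) hr2)
        rwa [hreq] at hr3
      set a := j₀
      set lam := q + U - (a + d) with hlam
      have hadly : a + d ≤ y := by omega
      have hlamU : U + 1 ≤ lam := by omega
      have hcov : ∀ j, j < lam → v (a + j) = v (a + j + d) := by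
        intro j hj
        exact hagree (a + j) (by omega) (by omega)
      -- the two left extensions of the word T' = seg v a lam are factors of w
      have hT1 : (v (a - 1) :: seg v a lam) <:+: w := by
        have hc : v (a - 1) :: seg v a lam = seg v (a - 1) (lam + 1) := by
          apply List.ext_getElem
          · simp [seg_length]
          · intro j h1 h2
            match j, h1 with
            | 0, h1 => simp [seg_getElem]
            | j + 1, h1 =>
              rw [List.getElem_cons_succ, seg_getElem, seg_getElem]
              congr 1
              omega
        rw [hc]; exact seg_infix hvw (by omega)
      have hT2 : (v (a + d - 1) :: seg v a lam) <:+: w := by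
        have hc : v (a + d - 1) :: seg v a lam = seg v (a + d - 1) (lam + 1) := by
          apply List.ext_getElem
          · simp [seg_length]
          · intro j h1 h2
            match j, h1 with
            | 0, h1 => simp [seg_getElem]
            | j + 1, h1 =>
              rw [List.getElem_cons_succ, seg_getElem, seg_getElem]
              have hD := hcov j (by simp only [List.length_cons, seg_length] at h1; omega)
              rw [show a + d - 1 + (j + 1) = a + j + d by omega]
              exact hD
        rw [hc]; exact seg_infix hvw (by omega)
      have habT : v (a - 1) ≠ v (a + d - 1) := by
        rw [show a + d - 1 = a - 1 + d by omega]
        exact hbreak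
      have hTpref : seg v a lam <+: w := hw _ _ _ habT hT1 hT2
      have hTsuf : seg v a lam <:+ w := by
        have hc : seg v a lam = w.drop (a + d) := by
          apply List.ext_getElem
          · rw [seg_length, List.length_drop, hlen]
          · intro j h1 h2
            have hj : j < lam := by rw [seg_length] at h1; exact h1
            rw [seg_getElem, List.getElem_drop]
            rw [hvw (a + d + j) (by omega)]
            rw [show a + d + j = a + j + d by omega]
            exact hcov j hj
        rw [hc]; exact List.drop_suffix _ _
      have hTne : seg v a lam ≠ w := by
        intro hcontra
        have := congrArg List.length hcontra
        rw [seg_length, hlen] at this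
        omega
      have := hmaxU _ hTpref hTsuf hTne
      rw [seg_length] at this
      omega

end PeriodicLSPAux

open PeriodicLSPAux in
theorem periodic_extension_lsp {A : Type*} (w p u : List A) (hne : w ≠ [])
    (hw : LSPFin w)
    (hupre : u <+: w) (husuf : u <:+ w) (hune : u ≠ w)
    (hmax : ∀ u' : List A, u' <+: w → u' <:+ w → u' ≠ w → u'.length ≤ u.length)
    (hdec : w = p ++ u) :
    p ≠ [] ∧ ∀ v : ℕ → A, PrefI p v → (∀ n, v (n + p.length) = v n) → LSPInf v := by
  have hpne : p ≠ [] := by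
    intro hp
    rw [hp, List.nil_append] at hdec
    exact hune hdec.symm
  refine ⟨hpne, ?_⟩
  intro v hpv hper
  set q := p.length with hqdef
  set U := u.length with hUdef
  have hq1 : 1 ≤ q := List.length_pos_iff.mpr hpne
  have hlen : w.length = q + U := by rw [hdec]; simp; rfl
  have hppref : p <+: w := ⟨u, hdec.symm⟩
  -- w agrees with v on [0, q+U)
  have hvw : ∀ i (h : i < w.length), w[i] = v i := by
    intro i
    induction i using Nat.strong_induction_on with
    | _ i ih =>
      intro h
      rcases lt_or_ge i q with hi | hi
      · rw [← hppref.getElem hi]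
        exact hpv i hi
      · have hiu : i - q < U := by rw [hlen] at h; omega
        have e1 : w[i] = u[i - q] := by
          have hx := List.getElem_of_eq hdec h
          rw [hx, List.getElem_append_right (by omega)]
        have e2 : u[i - q] = w[i - q] := hupre.getElem hiu
        have e3 : w[i - q]'(by omega) = v (i - q) := ih (i - q) (by omega) (by omega)
        have e4 : v (i - q) = v i := by
          have h5 := hper (i - q)
          rw [show i - q + q = i by omega] at h5
          exact h5.symm
        rw [e1, e2, e3, e4]
  -- shifting occurrences mod q
  have hnq : ∀ (n r : ℕ), v (r + n * q) = v r := by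
    intro n
    induction n with
    | zero => simp
    | succ n ihn =>
      intro r
      rw [show r + (n + 1) * q = r + n * q + q by ring, hper, ihn]
  have hmod : ∀ k c : ℕ, v (k % q + c) = v (k + c) := by
    intro k c
    have h := Nat.mod_add_div k q
    have h2 : q * (k / q) = (k / q) * q := Nat.mul_comm _ _
    rw [show k + c = (k % q + c) + (k / q) * q by omega]
    rw [hnq]
  -- main proof of LSPInf
  intro s a b hab ⟨k₁, hk₁⟩ ⟨k₂, hk₂⟩
  have ha : v k₁ = a := by
    have := hk₁ 0 (by simp)
    simpa using this.symm
  have hb : v k₂ = b := by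
    have := hk₂ 0 (by simp)
    simpa using this.symm
  set x := k₁ % q + 1 with hxdef
  set y := k₂ % q + 1 with hydef
  have hxq : x ≤ q := by have := Nat.mod_lt k₁ (show 0 < q by omega); omega
  have hyq : y ≤ q := by have := Nat.mod_lt k₂ (show 0 < q by omega); omega
  have occx : ∀ i (h : i < s.length), s[i] = v (x + i) := by
    intro i h
    have e1 := hk₁ (i + 1) (by simpa using Nat.succ_lt_succ h)
    rw [List.getElem_cons_succ] at e1
    have e2 := hmod k₁ (1 + i)
    rw [show k₁ % q + (1 + i) = x + i by omega] at e2
    rw [show k₁ + (1 + i) = k₁ + (i + 1) by omega] at e2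
    rw [e1, e2]
  have occy : ∀ i (h : i < s.length), s[i] = v (y + i) := by
    intro i h
    have e1 := hk₂ (i + 1) (by simpa using Nat.succ_lt_succ h)
    rw [List.getElem_cons_succ] at e1
    have e2 := hmod k₂ (1 + i)
    rw [show k₂ % q + (1 + i) = y + i by omega] at e2
    rw [show k₂ + (1 + i) = k₂ + (i + 1) by omega] at e2
    rw [e1, e2]
  have hpx : v (x - 1) = a := by
    have := hmod k₁ 0
    simp only [Nat.add_zero] at this
    rw [show x - 1 = k₁ % q by omega, this, ha]
  have hpy : v (y - 1) = b := by
    have := hmod k₂ 0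
    simp only [Nat.add_zero] at this
    rw [show y - 1 = k₂ % q by omega, this, hb]
  have hmaxU : ∀ u' : List A, u' <+: w → u' <:+ w → u' ≠ w → u'.length ≤ U :=
    fun u' h1 h2 h3 => hmax u' h1 h2 h3
  -- if an occurrence sits at residue 0, we are done directly
  by_cases hx0 : x = q
  · intro i hi
    rw [occx i hi, hx0]
    have := hper i
    rwa [show i + q = q + i by omega] at this
  by_cases hy0 : y = q
  · intro i hi
    rw [occy i hi, hy0]
    have := hper i
    rwa [show i + q = q + i by omega] at this
  have hxy : x ≠ y := by
    intro hcontra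
    apply hab
    rw [← hpx, ← hpy, hcontra]
  rcases lt_or_gt_of_ne hxy with h | h
  · exact key hw hmaxU hlen hvw s x y (by omega) h (by omega) occx occy
      (by rw [hpx, hpy]; exact hab)
  · exact key hw hmaxU hlen hvw s y x (by omega) h (by omega) occy occx
      (by rw [hpx, hpy]; exact fun hh => hab hh.symm)
end
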